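/- arXiv:1401.2335 — 7 statements merged into one kernel-verified Lean document; each statement's English description precedes it below -/
import Mathlib

section
/- For every natural number n ≥ 0, there exists a unique binary operation * on the set {1, …, 2^n} satisfying x * 1 = x + 1 for x < 2^n, 2^n * 1 = 1, and x * (y * 1) = (x * y) * (x * 1) for all x, y in {1, …, 2^n}; moreover, this operation obeys the left-selfdistributivity law x * (y * z) = (x * y) * (x * z) for all x, y, z in {1, …, 2^n}. -/
def lav (N x y : ℕ) : ℕ :=
  if h : N ≤ x then y
  else if h2 : y ≤ 1 then x + 1
  else lav N (max (x+1) (lav N x (y-1))) (x+1)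
termination_by (N - x, y)
decreasing_by
  · apply Prod.Lex.right; omega
  · exact Prod.Lex.left _ _ (Nat.sub_lt_sub_left (Nat.not_le.1 h)
      (lt_of_lt_of_le (Nat.lt_succ_self x) (le_max_left _ _)))

theorem lav_ge (N x y : ℕ) (h : N ≤ x) : lav N x y = y := by rw [lav]; simp [h]
theorem lav_one (N x y : ℕ) (h : x < N) (h2 : y ≤ 1) : lav N x y = x + 1 := by
  rw [lav]; simp [Nat.not_le.2 h, h2]
theorem lav_step' (N x y : ℕ) (h : x < N) (h2 : 2 ≤ y) :
    lav N x y = lav N (max (x+1) (lav N x (y-1))) (x+1) := by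
  rw [lav]; simp only [Nat.not_le.2 h, dif_neg, not_false_iff]
  rw [dif_neg (by omega)]

theorem lav_range (N x y : ℕ) (h : x < N) (hy : 1 ≤ y) :
    x + 1 ≤ lav N x y ∧ lav N x y ≤ N := by
  rcases Nat.lt_or_ge y 2 with h2 | h2
  · rw [lav_one N x y h (by omega)]; omega
  · have ih := lav_range N x (y-1) h (by omega)
    rw [lav_step' N x y h h2]
    have hmax : max (x+1) (lav N x (y-1)) = lav N x (y-1) := max_eq_right ih.1
    rw [hmax]
    set m := lav N x (y-1) with hm
    rcases Nat.lt_or_ge m N with hmN | hmN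
    · have ih2 := lav_range N m (x+1) hmN (by omega)
      omega
    · rw [lav_ge N m (x+1) hmN]; omega
termination_by (N - x, y)
decreasing_by
  · apply Prod.Lex.right; omega
  · exact Prod.Lex.left _ _ (by omega)

theorem lav_step (N x y : ℕ) (h : x < N) (h2 : 2 ≤ y) :
    lav N x y = lav N (lav N x (y-1)) (x+1) := by
  rw [lav_step' N x y h h2, max_eq_right (lav_range N x (y-1) h (by omega)).1]

theorem lav_succ (N x y : ℕ) (h : x < N) (hy : 1 ≤ y) :
    lav N x (y+1) = lav N (lav N x y) (x+1) := by
  have := lav_step N x (y+1) h (by omega); simpa using this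

section Period
variable {N x : ℕ} (hx : x < N)
include hx

theorem lav_reach : ∃ t, 1 ≤ t ∧ lav N x t = N := by
  have key : ∀ k : ℕ, (∃ t, 1 ≤ t ∧ lav N x t = N) ∨ x + 1 + k ≤ lav N x (1+k) := by
    intro k
    induction k with
    | zero => right; rw [lav_one N x 1 hx le_rfl]
    | succ k ih =>
      rcases ih with h | h
      · left; exact h
      · have hr := lav_range N x (1+k) hx (by omega)
        rcases Nat.lt_or_ge (lav N x (1+k)) N with hlt | hge
        · right
          rw [show 1+(k+1) = (1+k)+1 by omega, lav_succ N x (1+k) hx (by omega)]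
          have := lav_range N (lav N x (1+k)) (x+1) hlt (by omega)
          omega
        · left; exact ⟨1+k, by omega, by omega⟩
  rcases key (N - x) with h | h
  · exact h
  · have := lav_range N x (1 + (N-x)) hx (by omega); omega

variable {p : ℕ} (hp1 : 1 ≤ p) (hpN : lav N x p = N)
include hp1 hpN

theorem lav_per : ∀ y, 1 ≤ y → lav N x (y + p) = lav N x y := by
  intro y hy
  induction y with
  | zero => omega
  | succ y ih =>
    rcases Nat.eq_or_lt_of_le hy with h1 | h1
    · rw [← h1, show 1 + p = p + 1 by omega, lav_succ N x p hx hp1, hpN,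
        lav_ge N N (x+1) le_rfl, lav_one N x 1 hx le_rfl]
    · have hy1 : 1 ≤ y := by omega
      rw [show y + 1 + p = (y + p) + 1 by omega, lav_succ N x (y+p) hx (by omega),
        ih hy1, ← lav_succ N x y hx hy1]

theorem lav_periter : ∀ k y, 1 ≤ y → lav N x (y + k * p) = lav N x y := by
  intro k
  induction k with
  | zero => simp
  | succ k ih =>
    intro y hy
    rw [show y + (k+1)*p = (y + k*p) + p by ring, lav_per hx hp1 hpN _ (by omega), ih y hy]

theorem lav_mult : ∀ k, 1 ≤ k → lav N x (k * p) = N := by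
  intro k hk
  obtain ⟨k, rfl⟩ : ∃ m, k = m+1 := ⟨k-1, by omega⟩
  have := lav_periter hx hp1 hpN k p hp1
  rw [show p + k*p = (k+1) * p by ring] at this
  rw [this, hpN]

variable (hmin : ∀ t, 1 ≤ t → t < p → lav N x t ≠ N)
include hmin

theorem lav_char {y : ℕ} (hy : 1 ≤ y) (hN : lav N x y = N) : p ∣ y := by
  rcases Nat.eq_zero_or_pos (y % p) with h0 | h0
  · exact Nat.dvd_of_mod_eq_zero h0
  · exfalso
    have := lav_periter hx hp1 hpN (y / p) (y % p) h0
    rw [Nat.mod_add_div'] at this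
    exact hmin (y % p) h0 (Nat.mod_lt _ (by omega)) (this ▸ hN)
end Period

theorem lav_run {N x : ℕ} (hx : x < N) (s : ℕ) (hs : 1 ≤ s) :
    ∀ k, (∀ j, j < k → lav N x (s+j) < N) → lav N x s + k ≤ lav N x (s+k) := by
  intro k
  induction k with
  | zero => simp
  | succ k ih =>
    intro h
    have h1 : lav N x (s+k) < N := h k (by omega)
    have h2 := ih (fun j hj => h j (by omega))
    rw [show s + (k+1) = (s+k)+1 by omega, lav_succ N x (s+k) hx (by omega)]
    have := lav_range N (lav N x (s+k)) (x+1) h1 (by omega)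
    omega

def red (M a : ℕ) : ℕ := (a - 1) % M + 1

theorem red_pos (M a : ℕ) : 1 ≤ red M a := by simp [red]
theorem red_le {M : ℕ} (hM : 1 ≤ M) (a : ℕ) : red M a ≤ M := by
  have := Nat.mod_lt (a-1) (show 0 < M by omega); simp [red]; omega
theorem red_decomp (M : ℕ) {a : ℕ} (ha : 1 ≤ a) : ∃ k, a = M * k + red M a := by
  refine ⟨(a-1)/M, ?_⟩
  have := Nat.div_add_mod (a-1) M
  simp only [red]; omega
theorem red_dvd_iff {M q a : ℕ} (hq : q ∣ M) (ha : 1 ≤ a) : q ∣ red M a ↔ q ∣ a := by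
  obtain ⟨k, hk⟩ := red_decomp M ha
  conv_rhs => rw [hk]
  rw [Nat.dvd_add_right (Dvd.dvd.mul_right hq k)]
theorem red_eq_self {M a : ℕ} (ha : 1 ≤ a) (haM : a ≤ M) : red M a = a := by
  simp only [red]; rw [Nat.mod_eq_of_lt (by omega)]; omega
theorem red_eq_iff {M a : ℕ} (hM : 1 ≤ M) (ha : 1 ≤ a) : red M a = M ↔ M ∣ a := by
  constructor
  · intro h; rw [← red_dvd_iff (dvd_refl M) ha, h]
  · intro h
    have h2 := (red_dvd_iff (dvd_refl M) ha).2 h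
    have := Nat.le_of_dvd (by have := red_pos M a; omega) h2
    have := red_le hM a; omega
theorem red_succ {M a : ℕ} (ha : 1 ≤ a) (h : red M a < M) : red M (a+1) = red M a + 1 := by
  obtain ⟨k, hk⟩ := red_decomp M ha
  simp only [red, Nat.add_sub_cancel] at h hk ⊢
  have e1 : a % M = (M * k + ((a-1) % M + 1)) % M := by rw [← hk]
  rw [Nat.mul_add_mod, Nat.mod_eq_of_lt h] at e1
  omega
theorem red_of_dvd_sub {M a : ℕ} (hM : 1 ≤ M) (ha : 2 ≤ a) (h : M ∣ (a-1)) : red M a = 1 := by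
  obtain ⟨k, hk⟩ := h
  simp [red, hk, Nat.mul_mod_right]

theorem lav_hom (M : ℕ) (hM : 1 ≤ M) (hcol : ∀ a, 1 ≤ a → a ≤ M → lav M a M = M)
    (x y : ℕ) (hx1 : 1 ≤ x) (hx2 : x ≤ 2*M) (hy : 1 ≤ y) :
    red M (lav (2*M) x y) = lav M (red M x) (red M y) := by
  rcases Nat.lt_or_ge x (2*M) with hx | hx
  on_goal 2 =>
    have hxe : x = 2*M := by omega
    have hr : red M x = M := (red_eq_iff hM hx1).2 (by rw [hxe]; exact ⟨2, by ring⟩)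
    rw [lav_ge _ _ _ hx, hr, lav_ge M M _ le_rfl]
  rcases Nat.lt_or_ge y 2 with hy2 | hy2
  · -- y = 1
    have hy1 : y = 1 := by omega
    subst hy1
    rw [lav_one _ x 1 hx le_rfl, red_eq_self le_rfl hM]
    rcases Nat.lt_or_ge (red M x) M with ha | ha
    · rw [red_succ hx1 ha, lav_one M _ 1 ha le_rfl]
    · have ha' : red M x = M := by have := red_le hM x; omega
      have hdvd : M ∣ x := (red_eq_iff hM hx1).1 ha'
      have hxM : x = M := by
        obtain ⟨k, rfl⟩ := hdvd
        rcases k with _ | _ | k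
        · omega
        · ring
        · exfalso
          have : M * 2 ≤ M * (k+1+1) := Nat.mul_le_mul_left M (by omega)
          omega
      rw [ha', lav_ge M M 1 le_rfl, hxM, red_of_dvd_sub hM (by omega) (by simp)]
  · -- y ≥ 2
    have hym : 1 ≤ y - 1 := by omega
    have hm := lav_range (2*M) x (y-1) hx hym
    rw [lav_step (2*M) x y hx hy2]
    rw [lav_hom M hM hcol (lav (2*M) x (y-1)) (x+1) (by omega) hm.2 (by omega)]
    rw [lav_hom M hM hcol x (y-1) hx1 hx2 hym]
    have hyst : y = (y-1) + 1 := by omega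
    have hb1 : 1 ≤ red M (y-1) := red_pos _ _
    rcases Nat.lt_or_ge (red M x) M with ha | ha
    · rw [red_succ hx1 ha]
      rcases Nat.lt_or_ge (red M (y-1)) M with hb | hb
      · have hry := red_succ hym hb
        rw [← hyst] at hry
        rw [hry, lav_succ M (red M x) (red M (y-1)) ha hb1]
      · have hb' : red M (y-1) = M := by have := red_le hM (y-1); omega
        have hry : red M y = 1 := red_of_dvd_sub hM hy2 ((red_eq_iff hM hym).1 hb')
        rw [hry, hb', hcol (red M x) (red_pos M x) (le_of_lt ha), lav_ge M M _ le_rfl,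
          lav_one M (red M x) 1 ha le_rfl]
    · have ha' : red M x = M := by have := red_le hM x; omega
      have hdvd : M ∣ x := (red_eq_iff hM hx1).1 ha'
      have hxM : x = M := by
        obtain ⟨k, rfl⟩ := hdvd
        rcases k with _ | _ | k
        · omega
        · ring
        · exfalso
          have : M * 2 ≤ M * (k+1+1) := Nat.mul_le_mul_left M (by omega)
          omega
      have hx1r : red M (x+1) = 1 := by
        rw [hxM]; exact red_of_dvd_sub hM (by omega) (by simp)
      rw [ha', hx1r, lav_ge M M (red M (y-1)) le_rfl, lav_ge M M (red M y) le_rfl]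
      rcases Nat.lt_or_ge (red M (y-1)) M with hb | hb
      · have hry := red_succ hym hb
        rw [← hyst] at hry
        rw [hry, lav_one M _ 1 hb le_rfl]
      · have hb' : red M (y-1) = M := by have := red_le hM (y-1); omega
        have hry : red M y = 1 := red_of_dvd_sub hM hy2 ((red_eq_iff hM hym).1 hb')
        rw [hry, hb', lav_ge M M 1 le_rfl]
termination_by (2*M - x, y)
decreasing_by
  · apply Prod.Lex.left; omega
  · apply Prod.Lex.right; omega

theorem dvd_two_mul_cases {M v : ℕ} (hM : 1 ≤ M) (hv1 : 1 ≤ v) (hv2 : v ≤ 2*M)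
    (h : M ∣ v) : v = M ∨ v = 2*M := by
  obtain ⟨k, rfl⟩ := h
  rcases k with _ | _ | _ | k
  · omega
  · left; ring
  · right; ring
  · exfalso
    have : M * 3 ≤ M * (k+1+1+1) := Nat.mul_le_mul_left M (by omega)
    omega

theorem lav_col : ∀ n : ℕ, ∀ x, 1 ≤ x → x ≤ 2^n → lav (2^n) x (2^n) = 2^n := by
  intro n
  induction n with
  | zero =>
    intro x h1 h2
    simp only [pow_zero] at *
    have hx : x = 1 := by omega
    subst hx
    exact lav_ge 1 1 1 le_rfl
  | succ n ih =>
    have hM : 1 ≤ 2^n := Nat.one_le_two_pow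
    have hNM : (2:ℕ)^(n+1) = 2*2^n := by ring
    rw [hNM]
    set M := (2:ℕ)^n with hMdef
    intro x hx1 hx2
    rcases Nat.lt_or_ge x (2*M) with hx | hx
    swap
    · exact lav_ge _ _ _ hx
    -- big period p
    have hex := lav_reach hx
    obtain ⟨p, hp1, hpN, hmin⟩ : ∃ p, 1 ≤ p ∧ lav (2*M) x p = 2*M ∧
        ∀ t, 1 ≤ t → t < p → lav (2*M) x t ≠ 2*M :=
      ⟨Nat.find hex, (Nat.find_spec hex).1, (Nat.find_spec hex).2,
        fun t h1 h2 hN => Nat.find_min hex h2 ⟨h1, hN⟩⟩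
    -- p < 2*M
    have hplt : p < 2*M := by
      have hrun := lav_run hx 1 le_rfl (p-1) (by
        intro j hj
        have h1j : 1 ≤ 1 + j := by omega
        have := (lav_range (2*M) x (1+j) hx h1j).2
        have := hmin (1+j) h1j (by omega)
        omega)
      rw [lav_one (2*M) x 1 hx le_rfl] at hrun
      rw [show 1 + (p-1) = p by omega] at hrun
      omega
    have hredN : red M (2*M) = M := (red_eq_iff hM (by omega)).2 ⟨2, by ring⟩
    have hhom := fun y hy => lav_hom M hM ih x y hx1 (by omega) hy
    rcases Nat.lt_or_ge (red M x) M with ha | ha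
    · -- red M x < M : use small period q
      have hexq := lav_reach (N := M) ha
      obtain ⟨q, hq1, hqM, hqmin⟩ : ∃ q, 1 ≤ q ∧ lav M (red M x) q = M ∧
          ∀ t, 1 ≤ t → t < q → lav M (red M x) t ≠ M :=
        ⟨Nat.find hexq, (Nat.find_spec hexq).1, (Nat.find_spec hexq).2,
          fun t h1 h2 hN => Nat.find_min hexq h2 ⟨h1, hN⟩⟩
      have hqdvdM : q ∣ M :=
        lav_char ha hq1 hqM hqmin (y := M) hM (ih (red M x) (red_pos M x) (le_of_lt ha))
      -- q ∣ p
      have hqp : q ∣ p := by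
        have h1 := hhom p hp1
        rw [hpN, hredN] at h1
        have h2 : q ∣ red M p :=
          lav_char ha hq1 hqM hqmin (red_pos M p) h1.symm
        exact (red_dvd_iff hqdvdM hp1).1 h2
      -- for multiples of q the small row is M
      have hsmall : ∀ z, 1 ≤ z → q ∣ z → lav M (red M x) z = M := by
        intro z hz hdz
        obtain ⟨k, rfl⟩ := hdz
        rw [mul_comm]
        exact lav_mult ha hq1 hqM k (by
          rcases Nat.eq_zero_or_pos k with rfl | h
          · omega
          · exact h)
      have hval : ∀ w, 1 ≤ w → q ∣ w → lav (2*M) x w = M ∨ lav (2*M) x w = 2*M := by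
        intro w hw hdw
        have h1 := hhom w hw
        have h2 : q ∣ red M w := (red_dvd_iff hqdvdM hw).2 hdw
        rw [hsmall (red M w) (red_pos M w) h2] at h1
        have hrange := lav_range (2*M) x w hx hw
        exact dvd_two_mul_cases hM (by omega) hrange.2
          ((red_eq_iff hM (by omega)).1 h1)
      rcases hval (2*q) (by omega) ⟨2, by ring⟩ with h2q | h2q
      · -- contradiction case
        exfalso
        have hvq : lav (2*M) x q = M := by
          rcases hval q hq1 dvd_rfl with h | h
          · exact h
          · exfalso
            have hpq : p ∣ q := lav_char hx hp1 hpN hmin hq1 h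
            have hpq' : p = q := Nat.dvd_antisymm hpq hqp
            have := lav_mult hx hp1 hpN 2 (by omega)
            rw [show 2 * p = 2 * q by omega] at this
            omega
        have hrun := lav_run hx q hq1 q (by
          intro j hj
          have hj1 : 1 ≤ q + j := by omega
          have hle := (lav_range (2*M) x (q+j) hx hj1).2
          rcases Nat.eq_zero_or_pos j with rfl | hjpos
          · simpa [hvq] using (by omega : M < 2*M)
          · rcases Nat.lt_or_ge (lav (2*M) x (q+j)) (2*M) with h | h
            · exact h
            · exfalso
              have heq : lav (2*M) x (q+j) = 2*M := by omega
              have hpdvd : p ∣ q + j := lav_char hx hp1 hpN hmin hj1 heq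
              have : q ∣ q + j := dvd_trans hqp hpdvd
              have : q ∣ j := (Nat.dvd_add_right dvd_rfl).1 this
              have := Nat.le_of_dvd hjpos this
              omega)
        rw [show q + q = 2*q by ring] at hrun
        rw [hvq, h2q] at hrun
        omega
      · -- lav x (2q) = 2M : p ∣ 2q ∣ 2M
        have hp2q : p ∣ 2*q := lav_char hx hp1 hpN hmin (by omega) h2q
        have hpN2 : p ∣ 2*M := dvd_trans hp2q (mul_dvd_mul_left 2 hqdvdM)
        obtain ⟨k, hk⟩ := hpN2
        have hk1 : 1 ≤ k := by
          rcases Nat.eq_zero_or_pos k with rfl | h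
          · omega
          · exact h
        have := lav_mult hx hp1 hpN k hk1
        rw [Nat.mul_comm k p, ← hk] at this
        exact this
    · -- red M x = M : x = M (well, M ∣ x), p is multiple of M
      have ha' : red M x = M := by have := red_le hM x; omega
      have h1 := hhom p hp1
      rw [hpN, hredN, ha', lav_ge M M _ le_rfl] at h1
      have hMp : M ∣ p := by
        refine (red_dvd_iff (dvd_refl M) hp1).1 ?_
        rw [← h1]
      have hpM : p = M := by
        obtain ⟨k, rfl⟩ := hMp
        rcases k with _ | _ | k
        · omega
        · ring
        · exfalso
          have : M * 2 ≤ M * (k+1+1) := Nat.mul_le_mul_left M (by omega)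
          omega
      have := lav_mult hx hp1 hpN 2 (by omega)
      rw [show 2 * p = 2 * M by omega] at this
      exact this

theorem lav_uniq (N : ℕ) (op' : ℕ → ℕ → ℕ)
    (hrange : ∀ x y, 1 ≤ x → x ≤ N → 1 ≤ y → y ≤ N → 1 ≤ op' x y ∧ op' x y ≤ N)
    (hone : ∀ x, 1 ≤ x → x < N → op' x 1 = x + 1)
    (htop : op' N 1 = 1)
    (hsd : ∀ x y, 1 ≤ x → x ≤ N → 1 ≤ y → y ≤ N →
      op' x (op' y 1) = op' (op' x y) (op' x 1))
    (x y : ℕ) (hx1 : 1 ≤ x) (hx2 : x ≤ N) (hy1 : 1 ≤ y) (hy2 : y ≤ N) :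
    op' x y = lav N x y := by
  rcases Nat.lt_or_ge y 2 with hy | hy
  · have hye : y = 1 := by omega
    subst hye
    rcases Nat.lt_or_ge x N with hxN | hxN
    · rw [hone x hx1 hxN, lav_one N x 1 hxN le_rfl]
    · have hxe : x = N := by omega
      rw [hxe, htop, lav_ge N N 1 le_rfl]
  · have hym1 : 1 ≤ y - 1 := by omega
    have hym2 : y - 1 < N := by omega
    have hyold : op' (y-1) 1 = y := by rw [hone (y-1) hym1 hym2]; omega
    have e0 := hsd x (y-1) hx1 hx2 hym1 (by omega)
    rw [hyold] at e0
    have ihy : op' x (y-1) = lav N x (y-1) :=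
      lav_uniq N op' hrange hone htop hsd x (y-1) hx1 hx2 hym1 (by omega)
    rcases Nat.lt_or_ge x N with hxN | hxN
    · have hm := lav_range N x (y-1) hxN hym1
      have e1 : op' x y = op' (lav N x (y-1)) (x+1) := by
        rw [e0, ihy, hone x hx1 hxN]
      rw [e1, lav_uniq N op' hrange hone htop hsd (lav N x (y-1)) (x+1)
        (by omega) hm.2 (by omega) (by omega)]
      exact (lav_step N x y hxN hy).symm
    · have hxe : x = N := by omega
      rw [hxe] at e0 ihy ⊢
      rw [lav_ge N N y le_rfl]
      rw [htop, ihy, lav_ge N N (y-1) le_rfl] at e0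
      rw [e0, hone (y-1) hym1 hym2]
      omega
termination_by (N - x, y)
decreasing_by
  · apply Prod.Lex.right; omega
  · apply Prod.Lex.left; omega

theorem lav_sd (N : ℕ) (hcolN : ∀ x, 1 ≤ x → x ≤ N → lav N x N = N)
    (x y z : ℕ) (hx1 : 1 ≤ x) (hx2 : x ≤ N) (hy1 : 1 ≤ y) (hy2 : y ≤ N)
    (hz1 : 1 ≤ z) (hz2 : z ≤ N) :
    lav N x (lav N y z) = lav N (lav N x y) (lav N x z) := by
  rcases Nat.lt_or_ge x N with hxN | hxN
  swap
  · rw [lav_ge N x (lav N y z) hxN, lav_ge N x y hxN, lav_ge N x z hxN]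
  rcases Nat.lt_or_ge y N with hyN | hyN
  swap
  · have hye : y = N := by omega
    rw [hye, lav_ge N N z le_rfl, hcolN x hx1 hx2, lav_ge N N (lav N x z) le_rfl]
  rcases Nat.lt_or_ge z 2 with hz | hz
  · have hze : z = 1 := by omega
    subst hze
    rw [lav_one N y 1 hyN le_rfl, lav_one N x 1 hxN le_rfl,
      lav_succ N x y hxN hy1]
  · have hzm : 1 ≤ z - 1 := by omega
    have hu := lav_range N y (z-1) hyN hzm
    have ha := lav_range N x y hxN hy1
    have hb := lav_range N x (z-1) hxN hzm
    have step1 := lav_step N y z hyN hz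
    have e1 := lav_sd N hcolN x (lav N y (z-1)) (y+1) hx1 hx2 (by omega) hu.2
      (by omega) (by omega)
    have e2 := lav_sd N hcolN x y (z-1) hx1 hx2 hy1 hy2 hzm (by omega)
    have e3 := lav_succ N x y hxN hy1
    have e4 := lav_sd N hcolN (lav N x y) (lav N x (z-1)) (x+1) (by omega) ha.2
      (by omega) hb.2 (by omega) (by omega)
    have e5 := lav_step N x z hxN hz
    rw [step1, e1, e2, e3, ← e4, ← e5]
termination_by (N - x, N - y, z)
decreasing_by
  · apply Prod.Lex.right; apply Prod.Lex.left; omega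
  · apply Prod.Lex.right; apply Prod.Lex.right; omega
  · apply Prod.Lex.left; omega


/-- `op` is the Laver table operation on `{1, …, 2^n}`: it maps the set to itself,
satisfies `x * 1 = x + 1` for `x < 2^n`, `2^n * 1 = 1`, and
`x * (y * 1) = (x * y) * (x * 1)`. -/
def IsLaverOp (n : ℕ) (op : ℕ → ℕ → ℕ) : Prop :=
  (∀ x y, 1 ≤ x → x ≤ 2 ^ n → 1 ≤ y → y ≤ 2 ^ n → 1 ≤ op x y ∧ op x y ≤ 2 ^ n) ∧
  (∀ x, 1 ≤ x → x < 2 ^ n → op x 1 = x + 1) ∧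
  (op (2 ^ n) 1 = 1) ∧
  (∀ x y, 1 ≤ x → x ≤ 2 ^ n → 1 ≤ y → y ≤ 2 ^ n → op x (op y 1) = op (op x y) (op x 1))

theorem laver_exists_unique_and_selfdistributive (n : ℕ) :
    ∃ op : ℕ → ℕ → ℕ, IsLaverOp n op ∧
      (∀ op' : ℕ → ℕ → ℕ, IsLaverOp n op' →
        ∀ x y, 1 ≤ x → x ≤ 2 ^ n → 1 ≤ y → y ≤ 2 ^ n → op' x y = op x y) ∧
      (∀ x y z, 1 ≤ x → x ≤ 2 ^ n → 1 ≤ y → y ≤ 2 ^ n → 1 ≤ z → z ≤ 2 ^ n →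
        op x (op y z) = op (op x y) (op x z)) := by
  refine ⟨lav (2^n), ?_, ?_, ?_⟩
  · unfold IsLaverOp
    refine ⟨?_, ?_, ?_, ?_⟩
    · intro x y hx1 hx2 hy1 hy2
      rcases Nat.lt_or_ge x (2^n) with h | h
      · have := lav_range (2^n) x y h hy1; omega
      · rw [lav_ge _ _ _ h]; exact ⟨hy1, hy2⟩
    · intro x h1 h2
      exact lav_one _ x 1 h2 le_rfl
    · exact lav_ge _ _ _ le_rfl
    · intro x y hx1 hx2 hy1 hy2
      rcases Nat.lt_or_ge y (2^n) with hyN | hyN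
      · rw [lav_one _ y 1 hyN le_rfl]
        rcases Nat.lt_or_ge x (2^n) with hxN | hxN
        · rw [lav_succ _ x y hxN hy1, lav_one _ x 1 hxN le_rfl]
        · rw [lav_ge (2^n) x (y+1) hxN, lav_ge (2^n) x y hxN,
            lav_ge (2^n) x 1 hxN, lav_one _ y 1 hyN le_rfl]
      · have hye : y = 2^n := by omega
        rw [hye, lav_ge (2^n) (2^n) 1 le_rfl]
        rcases Nat.lt_or_ge x (2^n) with hxN | hxN
        · rw [lav_col n x hx1 hx2, lav_ge (2^n) (2^n) (lav (2^n) x 1) le_rfl]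
        · rw [lav_ge (2^n) x (2^n) hxN, lav_ge (2^n) (2^n) (lav (2^n) x 1) le_rfl]
  · intro op' h x y hx1 hx2 hy1 hy2
    exact lav_uniq (2^n) op' h.1 h.2.1 h.2.2.1 h.2.2.2 x y hx1 hx2 hy1 hy2
  · intro x y z hx1 hx2 hy1 hy2 hz1 hz2
    exact lav_sd (2^n) (lav_col n) x y z hx1 hx2 hy1 hy2 hz1 hz2
end

section
/- For every n ≥ 0 and every p in {1, …, 2^n}, there exists a natural number r with 2^r ≤ 2^n such that p *_n 1 < p *_n 2 < ⋯ < p *_n 2^r = 2^n, and the row of p is periodic with period 2^r: for all q in {1, …, 2^n}, p *_n q = p *_n q', where q' is the unique element of {1, …, 2^r} congruent to q modulo 2^r. -/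
/-- The last row of a Laver table is the identity: `2^n * q = q`. -/
theorem laver_top_row {n : ℕ} {op : ℕ → ℕ → ℕ} (h : IsLaverOp n op) :
    ∀ q, 1 ≤ q → q ≤ 2 ^ n → op (2 ^ n) q = q := by
  obtain ⟨hbd, hsucc, htop, hid⟩ := h
  intro q
  induction q with
  | zero => omega
  | succ q ih =>
    intro _ h2
    rcases Nat.eq_zero_or_pos q with hq | hq
    · subst hq; simpa using htop
    · have hq2 : q < 2 ^ n := by omega
      have key := hid (2 ^ n) q Nat.one_le_two_pow le_rfl hq (le_of_lt hq2)
      rw [htop, ih hq (le_of_lt hq2), hsucc q hq hq2] at key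
      exact key

/-- Main structural lemma about rows of a Laver table, proved by descending
induction on the row index `p`. -/
theorem laver_main {n : ℕ} {op : ℕ → ℕ → ℕ} (h : IsLaverOp n op) :
    ∀ p, 1 ≤ p → p ≤ 2 ^ n →
      ∃ d, 1 ≤ d ∧ d ≤ 2 ^ n ∧ d ∣ 2 ^ n ∧
        (∀ i, 1 ≤ i → i < d → op p i < 2 ^ n) ∧
        (∀ i, 1 ≤ i → i < d → op p i < op p (i + 1)) ∧
        op p d = 2 ^ n ∧
        (∀ q, 1 ≤ q → q ≤ 2 ^ n → op p q = op p ((q - 1) % d + 1)) ∧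
        (p < 2 ^ n → ∀ q, 1 ≤ q → q ≤ 2 ^ n → p < op p q) := by
  classical
  have hrow := laver_top_row h
  obtain ⟨hbd, hsucc, htop, hid⟩ := h
  have h2n : 1 ≤ 2 ^ n := Nat.one_le_two_pow
  suffices H : ∀ k p, 2 ^ n - p < k → 1 ≤ p → p ≤ 2 ^ n →
      ∃ d, 1 ≤ d ∧ d ≤ 2 ^ n ∧ d ∣ 2 ^ n ∧
        (∀ i, 1 ≤ i → i < d → op p i < 2 ^ n) ∧
        (∀ i, 1 ≤ i → i < d → op p i < op p (i + 1)) ∧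
        op p d = 2 ^ n ∧
        (∀ q, 1 ≤ q → q ≤ 2 ^ n → op p q = op p ((q - 1) % d + 1)) ∧
        (p < 2 ^ n → ∀ q, 1 ≤ q → q ≤ 2 ^ n → p < op p q) by
    intro p hp1 hp2
    exact H (2 ^ n - p + 1) p (by omega) hp1 hp2
  intro k
  induction k with
  | zero => intro p hk; omega
  | succ k ih =>
    intro p hk hp1 hp2
    rcases eq_or_lt_of_le hp2 with hp | hplt
    · -- top row : p = 2 ^ n
      subst hp
      refine ⟨2 ^ n, h2n, le_rfl, dvd_rfl, ?_, ?_, hrow (2 ^ n) h2n le_rfl, ?_, ?_⟩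
      · intro i hi1 hi2
        rw [hrow i hi1 (by omega)]; exact hi2
      · intro i hi1 hi2
        rw [hrow i hi1 (by omega), hrow (i + 1) (by omega) (by omega)]; omega
      · intro q hq1 hq2
        have hm : (q - 1) % 2 ^ n = q - 1 := Nat.mod_eq_of_lt (by omega)
        rw [hm]
        congr 1
        omega
      · intro h'; exact absurd h' (lt_irrefl _)
    · -- p < 2 ^ n
      -- row recursion
      have hstep : ∀ q, 1 ≤ q → q < 2 ^ n → op p (q + 1) = op (op p q) (p + 1) := by
        intro q hq1 hq2
        have key := hid p q hp1 hp2 hq1 (le_of_lt hq2)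
        rwa [hsucc q hq1 hq2, hsucc p hp1 hplt] at key
      -- induction hypothesis for higher rows
      have hQ : ∀ b, p < b → b ≤ 2 ^ n →
          ∃ d, 1 ≤ d ∧ d ≤ 2 ^ n ∧ d ∣ 2 ^ n ∧
            (∀ i, 1 ≤ i → i < d → op b i < 2 ^ n) ∧
            (∀ i, 1 ≤ i → i < d → op b i < op b (i + 1)) ∧
            op b d = 2 ^ n ∧
            (∀ q, 1 ≤ q → q ≤ 2 ^ n → op b q = op b ((q - 1) % d + 1)) ∧
            (b < 2 ^ n → ∀ q, 1 ≤ q → q ≤ 2 ^ n → b < op b q) :=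
        fun b hb1 hb2 => ih b (by omega) (by omega) hb2
      -- every entry of the row of p exceeds p
      have F1 : ∀ q, 1 ≤ q → q ≤ 2 ^ n → p < op p q := by
        intro q
        induction q with
        | zero => omega
        | succ q ihq =>
          intro _ h2
          rcases Nat.eq_zero_or_pos q with h0 | hq1
          · subst h0
            show p < op p 1
            rw [hsucc p hp1 hplt]; omega
          · have hb := ihq hq1 (by omega)
            have hbd' := hbd p q hp1 hp2 hq1 (by omega)
            rcases eq_or_lt_of_le hbd'.2 with he | hl
            · rw [hstep q hq1 (by omega), he, hrow (p + 1) (by omega) (by omega)]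
              omega
            · obtain ⟨_, _, _, _, _, _, _, _, hgt⟩ := hQ (op p q) hb hbd'.2
              have hx := hgt hl (p + 1) (by omega) (by omega)
              rw [hstep q hq1 (by omega)]
              omega
      -- the row strictly increases as long as it stays below 2^n
      have Fstep : ∀ q, 1 ≤ q → q < 2 ^ n → op p q < 2 ^ n → op p q < op p (q + 1) := by
        intro q hq1 hq2 hl
        have hb := F1 q hq1 (le_of_lt hq2)
        obtain ⟨_, _, _, _, _, _, _, _, hgt⟩ := hQ (op p q) hb (le_of_lt hl)
        have hx := hgt hl (p + 1) (by omega) (by omega)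
        rw [hstep q hq1 hq2]
        exact hx
      -- linear growth while below 2^n
      have hgrow : ∀ q, 1 ≤ q → q ≤ 2 ^ n →
          (∀ j, 1 ≤ j → j ≤ q → op p j < 2 ^ n) → p + q ≤ op p q := by
        intro q
        induction q with
        | zero => omega
        | succ q ihq =>
          intro _ h2 hall
          rcases Nat.eq_zero_or_pos q with h0 | hq1
          · subst h0
            show p + 1 ≤ op p 1
            rw [hsucc p hp1 hplt]
          · have h1 := ihq hq1 (by omega) (fun j a b => hall j a (by omega))
            have h2' := Fstep q hq1 (by omega) (hall q hq1 (by omega))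
            omega
      -- the row reaches 2^n
      have hex : ∃ q, 1 ≤ q ∧ q ≤ 2 ^ n ∧ op p q = 2 ^ n := by
        by_contra hcon
        push_neg at hcon
        have hall : ∀ j, 1 ≤ j → j ≤ 2 ^ n → op p j < 2 ^ n := by
          intro j hj1 hj2
          have hb := (hbd p j hp1 hp2 hj1 hj2).2
          have hne := hcon j hj1 hj2
          omega
        have hg := hgrow (2 ^ n) h2n le_rfl hall
        have hl := hall (2 ^ n) h2n le_rfl
        omega
      set d := Nat.find hex with hddef
      obtain ⟨hd1, hd2, hd3⟩ := Nat.find_spec hex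
      have hdmin : ∀ m, m < d → ¬(1 ≤ m ∧ m ≤ 2 ^ n ∧ op p m = 2 ^ n) :=
        fun m hm => Nat.find_min hex hm
      -- entries before d are below 2^n
      have hlt2 : ∀ i, 1 ≤ i → i < d → op p i < 2 ^ n := by
        intro i hi1 hi2
        have hb := (hbd p i hp1 hp2 hi1 (by omega)).2
        have hne : op p i ≠ 2 ^ n := by
          intro he
          exact hdmin i hi2 ⟨hi1, by omega, he⟩
        omega
      have hinc : ∀ i, 1 ≤ i → i < d → op p i < op p (i + 1) :=
        fun i hi1 hi2 => Fstep i hi1 (by omega) (hlt2 i hi1 hi2)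
      -- periodicity shift
      have hshift : ∀ j, 1 ≤ j → j + d ≤ 2 ^ n → op p (j + d) = op p j := by
        intro j
        induction j with
        | zero => omega
        | succ j ihj =>
          intro _ hj2
          rcases Nat.eq_zero_or_pos j with h0 | hj1
          · subst h0
            show op p (0 + 1 + d) = op p (0 + 1)
            have e : 0 + 1 + d = d + 1 := by omega
            rw [e]
            rw [hstep d hd1 (by omega), hd3, hrow (p + 1) (by omega) (by omega),
              hsucc p hp1 hplt]
          · have h1 := ihj hj1 (by omega)
            have e : j + 1 + d = (j + d) + 1 := by omega
            rw [e, hstep (j + d) (by omega) (by omega), h1, hstep j hj1 (by omega)]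
      -- periodicity
      have hper : ∀ q, 1 ≤ q → q ≤ 2 ^ n → op p q = op p ((q - 1) % d + 1) := by
        intro q
        induction q using Nat.strong_induction_on with
        | _ q ihq =>
          intro hq1 hq2
          rcases le_or_gt q d with hle | hgt
          · have hm : (q - 1) % d = q - 1 := Nat.mod_eq_of_lt (by omega)
            rw [hm]
            congr 1
            omega
          · have h1 : 1 ≤ q - d := by omega
            have h3 := hshift (q - d) h1 (by omega)
            have h2 : (q - d) + d = q := by omega
            rw [h2] at h3
            have h4 := ihq (q - d) (by omega) h1 (by omega)
            have h5 : (q - d - 1) % d = (q - 1) % d := by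
              have e : q - 1 = (q - d - 1) + d := by omega
              rw [e, Nat.add_mod_right]
            rw [h3, h4, h5]
      -- the full row ends at 2^n
      have hfull : op p (2 ^ n) = 2 ^ n := by
        have key := hid p (2 ^ n) hp1 hp2 h2n le_rfl
        rw [htop, hsucc p hp1 hplt] at key
        have hbp := F1 (2 ^ n) h2n le_rfl
        have hbb := (hbd p (2 ^ n) hp1 hp2 h2n le_rfl).2
        rcases eq_or_lt_of_le hbb with he | hl
        · exact he
        · obtain ⟨_, _, _, _, _, _, _, _, hgt⟩ := hQ (op p (2 ^ n)) hbp (le_of_lt hl)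
          have hx := hgt hl (p + 1) (by omega) (by omega)
          omega
      -- d divides 2^n
      have hdvd : d ∣ 2 ^ n := by
        have hm := hper (2 ^ n) h2n le_rfl
        rw [hfull] at hm
        have hmodlt : (2 ^ n - 1) % d < d := Nat.mod_lt _ (by omega)
        rcases eq_or_lt_of_le (show (2 ^ n - 1) % d + 1 ≤ d by omega) with he | hl2
        · have hmod : (2 ^ n - 1) % d = d - 1 := by omega
          have hdm := Nat.div_add_mod (2 ^ n - 1) d
          rw [hmod] at hdm
          refine ⟨(2 ^ n - 1) / d + 1, ?_⟩
          rw [Nat.mul_add, Nat.mul_one]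
          omega
        · exfalso
          have hx := hlt2 ((2 ^ n - 1) % d + 1) (by omega) hl2
          omega
      exact ⟨d, hd1, hd2, hdvd, hlt2, hinc, hd3, hper, fun _ => F1⟩

/-- Theorem (Laver), periodicity of rows: for `p` in `{1, …, 2^n}` there is `r` with
`2^r ≤ 2^n` such that `p * 1 < p * 2 < ⋯ < p * 2^r = 2^n`, and the row of `p`
is periodic with period `2^r`. -/
theorem laver_row_periodic (n : ℕ) (op : ℕ → ℕ → ℕ) (h : IsLaverOp n op)
    (p : ℕ) (hp1 : 1 ≤ p) (hp2 : p ≤ 2 ^ n) :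
    ∃ r : ℕ, 2 ^ r ≤ 2 ^ n ∧
      (∀ i, 1 ≤ i → i < 2 ^ r → op p i < op p (i + 1)) ∧
      op p (2 ^ r) = 2 ^ n ∧
      (∀ q, 1 ≤ q → q ≤ 2 ^ n → op p q = op p ((q - 1) % 2 ^ r + 1)) := by
  obtain ⟨d, hd1, hd2, hdvd, hlt2, hinc, hd3, hper, _⟩ := laver_main h p hp1 hp2
  obtain ⟨r, hr, hre⟩ := (Nat.dvd_prime_pow Nat.prime_two).mp hdvd
  subst hre
  exact ⟨r, hd2, hinc, hd3, hper⟩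
end

section
/- For every n ≥ 1, the map proj_n sending each p in {1, …, 2^n} to the unique element of {1, …, 2^{n-1}} congruent to p modulo 2^{n-1} is a surjective homomorphism from A_n to A_{n-1}: for all p, q in {1, …, 2^n}, proj_n(p *_n q) = proj_n(p) *_{n-1} proj_n(q), and every element of {1, …, 2^{n-1}} is in the image of proj_n. -/
/-- In any Laver operation, the top row is the identity: `2^n * y = y`. -/
theorem laver_row_top {n : ℕ} {op : ℕ → ℕ → ℕ} (h : IsLaverOp n op) :
    ∀ y, 1 ≤ y → y ≤ 2 ^ n → op (2 ^ n) y = y := by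
  obtain ⟨hb, hs, ht, hd⟩ := h
  have hN : 1 ≤ 2 ^ n := Nat.one_le_two_pow
  intro y h1
  induction y, h1 using Nat.le_induction with
  | base => intro _; exact ht
  | succ y hy ih =>
    intro h2
    have hylt : y < 2 ^ n := by omega
    have hy1 : op y 1 = y + 1 := hs y hy hylt
    rw [← hy1, hd (2 ^ n) y hN le_rfl hy (le_of_lt hylt), ih (le_of_lt hylt), ht, hy1]

/-- In any Laver operation, `x < x * y` whenever `x < 2^n`. -/
theorem laver_lt_op {n : ℕ} {op : ℕ → ℕ → ℕ} (h : IsLaverOp n op) :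
    ∀ x, 1 ≤ x → x < 2 ^ n → ∀ y, 1 ≤ y → y ≤ 2 ^ n → x < op x y := by
  obtain ⟨hb, hs, ht, hd⟩ := h
  suffices H : ∀ d x, 1 ≤ x → x < 2 ^ n → 2 ^ n - x ≤ d → ∀ y, 1 ≤ y → y ≤ 2 ^ n → x < op x y by
    intro x h1 h2
    exact H (2 ^ n) x h1 h2 (by omega)
  intro d
  induction d with
  | zero => intro x h1 h2 h3; omega
  | succ d ihd =>
    intro x h1 h2 h3 y hy1
    induction y, hy1 using Nat.le_induction with
    | base => intro _; rw [hs x h1 h2]; omega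
    | succ y hy ih =>
      intro hy2
      have hylt : y < 2 ^ n := by omega
      have hy1' : op y 1 = y + 1 := hs y hy hylt
      have hx1 : op x 1 = x + 1 := hs x h1 h2
      have step : op x (y + 1) = op (op x y) (x + 1) := by
        rw [← hy1', hd x y h1 (le_of_lt h2) hy (le_of_lt hylt), hx1]
      have hz := ih (le_of_lt hylt)
      have hzb := hb x y h1 (le_of_lt h2) hy (le_of_lt hylt)
      rcases eq_or_lt_of_le hzb.2 with heq | hlt2
      · rw [step, heq, laver_row_top ⟨hb, hs, ht, hd⟩ (x + 1) (by omega) (by omega)]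
        omega
      · have := ihd (op x y) hzb.1 hlt2 (by omega) (x + 1) (by omega) (by omega)
        rw [step]; omega

/-- The map `p ↦ (p - 1) % 2^(n-1) + 1` (the unique element of `{1, …, 2^(n-1)}`
congruent to `p` mod `2^(n-1)`) is a surjective homomorphism from `A_n` to `A_(n-1)`. -/
theorem laver_projection_hom_surjective (n : ℕ) (hn : 1 ≤ n)
    (opn opm : ℕ → ℕ → ℕ) (hopn : IsLaverOp n opn) (hopm : IsLaverOp (n - 1) opm) :
    (∀ p q, 1 ≤ p → p ≤ 2 ^ n → 1 ≤ q → q ≤ 2 ^ n →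
      (opn p q - 1) % 2 ^ (n - 1) + 1 =
        opm ((p - 1) % 2 ^ (n - 1) + 1) ((q - 1) % 2 ^ (n - 1) + 1)) ∧
    (∀ q, 1 ≤ q → q ≤ 2 ^ (n - 1) →
      ∃ p, 1 ≤ p ∧ p ≤ 2 ^ n ∧ (p - 1) % 2 ^ (n - 1) + 1 = q) := by
  obtain ⟨k, rfl⟩ : ∃ k, n = k + 1 := ⟨n - 1, by omega⟩
  simp only [Nat.add_sub_cancel] at hopm ⊢
  have hMpos : 0 < 2 ^ k := Nat.pow_pos (by norm_num)
  have h2M : 2 ^ (k + 1) = 2 * 2 ^ k := by rw [pow_succ, Nat.mul_comm]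
  have hbn := hopn.1
  have hsn := hopn.2.1
  have htn := hopn.2.2.1
  have hdn := hopn.2.2.2
  have hbm := hopm.1
  have hsm := hopm.2.1
  have htm := hopm.2.2.1
  have hdm := hopm.2.2.2
  have hrtn := laver_row_top hopn
  have hrtm := laver_row_top hopm
  have hltn := laver_lt_op hopn
  -- projection of the top element
  have htopproj : (2 ^ (k + 1) - 1) % 2 ^ k = 2 ^ k - 1 := by
    have h' : 2 ^ (k + 1) - 1 = 2 ^ k + (2 ^ k - 1) := by omega
    rw [h', Nat.add_mod_left, Nat.mod_eq_of_lt (by omega)]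
  -- projection commutes with successor: π (p *ₙ 1) = π p *ₘ 1
  have hbase : ∀ p, 1 ≤ p → p ≤ 2 ^ (k + 1) →
      (opn p 1 - 1) % 2 ^ k + 1 = opm ((p - 1) % 2 ^ k + 1) 1 := by
    intro p h1 h2
    rcases eq_or_lt_of_le h2 with heq | hlt
    · subst heq
      rw [htn, htopproj]
      have h' : 2 ^ k - 1 + 1 = 2 ^ k := by omega
      rw [h', htm]
      simp
    · rw [hsn p h1 hlt, Nat.add_sub_cancel]
      have hp : p - 1 + 1 = p := by omega
      have h1' : p % 2 ^ k = ((p - 1) % 2 ^ k + 1) % 2 ^ k := by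
        conv_lhs => rw [← hp]
        rw [← Nat.mod_add_mod]
      by_cases hc : (p - 1) % 2 ^ k + 1 = 2 ^ k
      · have h0 : p % 2 ^ k = 0 := by rw [h1', hc, Nat.mod_self]
        rw [h0, hc, htm]
      · have hlt2 : (p - 1) % 2 ^ k + 1 < 2 ^ k := by
          have := Nat.mod_lt (p - 1) hMpos; omega
        have hstep := hsm ((p - 1) % 2 ^ k + 1) (by omega) hlt2
        rw [hstep]
        have : p % 2 ^ k = (p - 1) % 2 ^ k + 1 := by
          rw [h1', Nat.mod_eq_of_lt hlt2]
        omega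
  -- the top row case of the homomorphism
  have htoprow : ∀ q, 1 ≤ q → q ≤ 2 ^ (k + 1) →
      (opn (2 ^ (k + 1)) q - 1) % 2 ^ k + 1 =
        opm ((2 ^ (k + 1) - 1) % 2 ^ k + 1) ((q - 1) % 2 ^ k + 1) := by
    intro q hq1 hq2
    rw [hrtn q hq1 hq2, htopproj]
    have h' : 2 ^ k - 1 + 1 = 2 ^ k := by omega
    have hqb2 : (q - 1) % 2 ^ k + 1 ≤ 2 ^ k := by
      have := Nat.mod_lt (q - 1) hMpos; omega
    rw [h', hrtm ((q - 1) % 2 ^ k + 1) (by omega) hqb2]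
  -- main homomorphism property, by downward induction on p, then induction on q
  have hom : ∀ d p, 1 ≤ p → p ≤ 2 ^ (k + 1) → 2 ^ (k + 1) - p ≤ d →
      ∀ q, 1 ≤ q → q ≤ 2 ^ (k + 1) →
      (opn p q - 1) % 2 ^ k + 1 = opm ((p - 1) % 2 ^ k + 1) ((q - 1) % 2 ^ k + 1) := by
    intro d
    induction d with
    | zero =>
      intro p h1 h2 h3 q hq1 hq2
      have : p = 2 ^ (k + 1) := by omega
      subst this
      exact htoprow q hq1 hq2
    | succ d ihd =>
      intro p h1 h2 h3
      rcases eq_or_lt_of_le h2 with heq | hplt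
      · subst heq; exact htoprow
      · intro q hq1
        induction q, hq1 using Nat.le_induction with
        | base =>
          intro _
          have h := hbase p h1 h2
          simpa using h
        | succ q hq ihq =>
          intro hq2
          have hqlt : q < 2 ^ (k + 1) := by omega
          have step : opn p (q + 1) = opn (opn p q) (p + 1) := by
            rw [← hsn q hq hqlt, hdn p q h1 (le_of_lt hplt) hq (le_of_lt hqlt),
              hsn p h1 hplt]
          have hzb := hbn p q h1 (le_of_lt hplt) hq (le_of_lt hqlt)
          have hzgt : p < opn p q := hltn p h1 hplt q hq (le_of_lt hqlt)
          have houter := ihd (opn p q) hzb.1 hzb.2 (by omega) (p + 1) (by omega) (by omega)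
          have hinner := ihq (le_of_lt hqlt)
          have hps : (p + 1 - 1) % 2 ^ k + 1 = opm ((p - 1) % 2 ^ k + 1) 1 := by
            have h := hbase p h1 h2
            rwa [hsn p h1 hplt] at h
          have hqs : (q + 1 - 1) % 2 ^ k + 1 = opm ((q - 1) % 2 ^ k + 1) 1 := by
            have h := hbase q hq (le_of_lt hqlt)
            rwa [hsn q hq hqlt] at h
          have hpb2 : (p - 1) % 2 ^ k + 1 ≤ 2 ^ k := by
            have := Nat.mod_lt (p - 1) hMpos; omega
          have hqb2 : (q - 1) % 2 ^ k + 1 ≤ 2 ^ k := by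
            have := Nat.mod_lt (q - 1) hMpos; omega
          rw [step, houter, hinner, hps, hqs]
          exact (hdm _ _ (by omega) hpb2 (by omega) hqb2).symm
  constructor
  · intro p q h1 h2 h3 h4
    exact hom (2 ^ (k + 1)) p h1 h2 (by omega) q h3 h4
  · intro q h1 h2
    refine ⟨q, h1, by omega, ?_⟩
    rw [Nat.mod_eq_of_lt (by omega)]
    omega
end

section
/- For every n ≥ 1 and every p in {1, …, 2^{n-1}}, there exists an integer r with 0 ≤ r ≤ per_{n-1}(p) such that, for all q with 1 ≤ q ≤ r, one has p *_n q = p *_{n-1} q, and for all q with r < q ≤ per_{n-1}(p), one has p *_n q = p *_{n-1} q + 2^{n-1}. -/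
/-- The top row of a Laver table is the identity. -/
lemma laver_top (n : ℕ) (op : ℕ → ℕ → ℕ) (h : IsLaverOp n op) :
    ∀ q, 1 ≤ q → q ≤ 2 ^ n → op (2 ^ n) q = q := by
  intro q hq1
  induction q, hq1 using Nat.le_induction with
  | base => intro _; exact h.2.2.1
  | succ q hq IH =>
    intro hq2
    have hqlt : q < 2 ^ n := by omega
    have e1 : op q 1 = q + 1 := h.2.1 q hq hqlt
    have e2 : op (2 ^ n) (op q 1) = op (op (2 ^ n) q) (op (2 ^ n) 1) :=
      h.2.2.2 (2 ^ n) q Nat.one_le_two_pow le_rfl hq (by omega)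
    rw [← e1, e2, IH (by omega), h.2.2.1, e1]

/-- Every entry in a row strictly exceeds the row index (for rows below the top). -/
lemma laver_gt (n : ℕ) (op : ℕ → ℕ → ℕ) (h : IsLaverOp n op) :
    ∀ x, 1 ≤ x → x < 2 ^ n → ∀ q, 1 ≤ q → q ≤ 2 ^ n → x < op x q := by
  have key : ∀ k x, 1 ≤ x → x < 2 ^ n → 2 ^ n - x ≤ k →
      ∀ q, 1 ≤ q → q ≤ 2 ^ n → x < op x q := by
    intro k
    induction k with
    | zero => intro x hx1 hx2 hk; omega
    | succ k ih =>
      intro x hx1 hx2 hk q hq1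
      induction q, hq1 using Nat.le_induction with
      | base => intro _; rw [h.2.1 x hx1 hx2]; omega
      | succ q hq IH =>
        intro hq2
        have hqlt : q < 2 ^ n := by omega
        have hx : x < op x q := IH (by omega)
        have hrange := h.1 x q hx1 hx2.le hq (by omega)
        have e1 : op q 1 = q + 1 := h.2.1 q hq hqlt
        have e2 : op x 1 = x + 1 := h.2.1 x hx1 hx2
        have e3 : op x (q + 1) = op (op x q) (x + 1) := by
          rw [← e1, h.2.2.2 x q hx1 hx2.le hq (by omega), e2]
        rcases eq_or_lt_of_le hrange.2 with heq | hlt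
        · rw [e3, heq, laver_top n op h (x + 1) (by omega) (by omega)]; omega
        · have := ih (op x q) (by omega) hlt (by omega) (x + 1) (by omega) (by omega)
          rw [e3]; omega
  intro x hx1 hx2 q hq1 hq2
  exact key (2 ^ n) x hx1 hx2 (by omega) q hq1 hq2

/-- Reduction map from `{1,…,2^(m+1)}` onto `{1,…,2^m}`. -/
def laverPi (m x : ℕ) : ℕ := if x ≤ 2 ^ m then x else x - 2 ^ m

/-- Reduction mod `2^(n-1)` is a homomorphism from `A_n` to `A_(n-1)`. -/
lemma laver_hom (n : ℕ) (hn : 1 ≤ n) (opn opm : ℕ → ℕ → ℕ)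
    (hopn : IsLaverOp n opn) (hopm : IsLaverOp (n - 1) opm) :
    ∀ x, 1 ≤ x → x ≤ 2 ^ n → ∀ q, 1 ≤ q → q ≤ 2 ^ n →
      laverPi (n - 1) (opn x q) = opm (laverPi (n - 1) x) (laverPi (n - 1) q) := by
  set m := n - 1 with hm
  have hnm : n = m + 1 := by omega
  have hm1 : 1 ≤ 2 ^ m := Nat.one_le_two_pow
  have h2 : 2 ^ n = 2 ^ m + 2 ^ m := by rw [hnm, pow_succ]; ring
  have hπ : ∀ x, 1 ≤ x → x ≤ 2 ^ n → 1 ≤ laverPi m x ∧ laverPi m x ≤ 2 ^ m := by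
    intro x h1 h2'; unfold laverPi; split <;> omega
  have hπtop : laverPi m (2 ^ n) = 2 ^ m := by unfold laverPi; split <;> omega
  have hπone : laverPi m 1 = 1 := by unfold laverPi; split <;> omega
  have hA : ∀ x, 1 ≤ x → x ≤ 2 ^ n → laverPi m (opn x 1) = opm (laverPi m x) 1 := by
    intro x h1 hx
    rcases eq_or_lt_of_le hx with heq | hlt
    · rw [heq, hopn.2.2.1, hπtop, hopm.2.2.1, hπone]
    · rw [hopn.2.1 x h1 hlt]
      rcases lt_trichotomy x (2 ^ m) with hc | hc | hc
      · have e1 : laverPi m x = x := by unfold laverPi; split <;> omega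
        have e2 : laverPi m (x + 1) = x + 1 := by unfold laverPi; split <;> omega
        rw [e1, e2, hopm.2.1 x h1 hc]
      · have e1 : laverPi m x = 2 ^ m := by unfold laverPi; split <;> omega
        have e2 : laverPi m (x + 1) = 1 := by unfold laverPi; split <;> omega
        rw [e1, e2, hopm.2.2.1]
      · have e1 : laverPi m x = x - 2 ^ m := by unfold laverPi; split <;> omega
        have e2 : laverPi m (x + 1) = x - 2 ^ m + 1 := by unfold laverPi; split <;> omega
        rw [e1, e2, hopm.2.1 (x - 2 ^ m) (by omega) (by omega)]
  have key : ∀ k x, 1 ≤ x → x ≤ 2 ^ n → 2 ^ n - x ≤ k → ∀ q, 1 ≤ q → q ≤ 2 ^ n →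
      laverPi m (opn x q) = opm (laverPi m x) (laverPi m q) := by
    intro k
    induction k with
    | zero =>
      intro x hx1 hx2 hk q hq1 hq2
      have hxe : x = 2 ^ n := by omega
      subst hxe
      rw [laver_top n opn hopn q hq1 hq2, hπtop,
        laver_top m opm hopm (laverPi m q) (hπ q hq1 hq2).1 (hπ q hq1 hq2).2]
    | succ k ih =>
      intro x hx1 hx2 hk q hq1
      rcases eq_or_lt_of_le hx2 with heq | hxlt
      · intro hq2
        subst heq
        rw [laver_top n opn hopn q hq1 hq2, hπtop,
          laver_top m opm hopm (laverPi m q) (hπ q hq1 hq2).1 (hπ q hq1 hq2).2]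
      · induction q, hq1 using Nat.le_induction with
        | base => intro _; rw [hπone]; exact hA x hx1 hx2
        | succ q hq IH =>
          intro hq2
          have hqlt : q < 2 ^ n := by omega
          have eq1 : opn q 1 = q + 1 := hopn.2.1 q hq hqlt
          have ex1 : opn x 1 = x + 1 := hopn.2.1 x hx1 hxlt
          have e3 : opn x (q + 1) = opn (opn x q) (x + 1) := by
            rw [← eq1, hopn.2.2.2 x q hx1 hx2 hq (by omega), ex1]
          have hX := hopn.1 x q hx1 hx2 hq (by omega)
          have hXgt : x < opn x q := laver_gt n opn hopn x hx1 hxlt q hq (by omega)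
          have hrec : laverPi m (opn (opn x q) (x + 1)) =
              opm (laverPi m (opn x q)) (laverPi m (x + 1)) :=
            ih (opn x q) hX.1 hX.2 (by omega) (x + 1) (by omega) (by omega)
          have hXpi : laverPi m (opn x q) = opm (laverPi m x) (laverPi m q) := IH (by omega)
          have hx1pi : laverPi m (x + 1) = opm (laverPi m x) 1 := by
            rw [← ex1]; exact hA x hx1 hx2
          have hq1pi : laverPi m (q + 1) = opm (laverPi m q) 1 := by
            rw [← eq1]; exact hA q hq (by omega)
          have hxr := hπ x hx1 hx2
          have hqr := hπ q hq (by omega)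
          have hdist : opm (laverPi m x) (opm (laverPi m q) 1) =
              opm (opm (laverPi m x) (laverPi m q)) (opm (laverPi m x) 1) :=
            hopm.2.2.2 (laverPi m x) (laverPi m q) hxr.1 hxr.2 hqr.1 hqr.2
          rw [e3, hrec, hXpi, hx1pi, hq1pi, hdist]
  intro x hx1 hx2 q hq1 hq2
  exact key (2 ^ n) x hx1 hx2 (by omega) q hq1 hq2

/-- Threshold: for `p ≤ 2^(n-1)` there is `0 ≤ r ≤ per_(n-1)(p)` such that the row of `p`
in `A_n` coincides with its row in `A_(n-1)` up to position `r`, and is shifted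
by `2^(n-1)` from position `r + 1` to `per_(n-1)(p)`.  Here the period `per_(n-1)(p)`
is the least `q ≥ 1` with `p *_(n-1) q = 2^(n-1)`. -/
theorem laver_threshold (n : ℕ) (hn : 1 ≤ n)
    (opn opm : ℕ → ℕ → ℕ) (hopn : IsLaverOp n opn) (hopm : IsLaverOp (n - 1) opm)
    (p : ℕ) (hp1 : 1 ≤ p) (hp2 : p ≤ 2 ^ (n - 1))
    (per : ℕ) (hper : IsLeast {q : ℕ | 1 ≤ q ∧ opm p q = 2 ^ (n - 1)} per) :
    ∃ r : ℕ, r ≤ per ∧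
      (∀ q, 1 ≤ q → q ≤ r → opn p q = opm p q) ∧
      (∀ q, r < q → q ≤ per → opn p q = opm p q + 2 ^ (n - 1)) := by
  classical
  obtain ⟨m, rfl⟩ : ∃ m, n = m + 1 := ⟨n - 1, by omega⟩
  simp only [Nat.add_sub_cancel] at hopm hper hp2 ⊢
  have hnm : m + 1 = m + 1 := rfl
  have hm1 : 1 ≤ 2 ^ m := Nat.one_le_two_pow
  have h2 : 2 ^ (m + 1) = 2 ^ m + 2 ^ m := by rw [pow_succ]; ring
  have hper1 : 1 ≤ per := hper.1.1
  have hpereq : opm p per = 2 ^ m := hper.1.2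
  -- per ≤ 2^m
  have hexist : ∃ q, 1 ≤ q ∧ q ≤ 2 ^ m ∧ opm p q = 2 ^ m := by
    rcases eq_or_lt_of_le hp2 with heq | hplt
    · exact ⟨2 ^ m, hm1, le_rfl, by
        rw [heq] at *; exact laver_top m opm hopm (2 ^ m) hm1 le_rfl⟩
    · have step : ∀ q, 1 ≤ q → q ≤ 2 ^ m →
          ((∃ q', 1 ≤ q' ∧ q' ≤ q ∧ opm p q' = 2 ^ m) ∨ p + q ≤ opm p q) := by
        intro q hq1
        induction q, hq1 using Nat.le_induction with
        | base =>
          intro _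
          right; rw [hopm.2.1 p hp1 hplt]
        | succ q hq IH =>
          intro hq2
          rcases IH (by omega) with ⟨q', h1, h2', h3⟩ | hge
          · exact Or.inl ⟨q', h1, by omega, h3⟩
          · have hb := hopm.1 p q hp1 (by omega) hq (by omega)
            rcases eq_or_lt_of_le hb.2 with heq2 | hlt2
            · exact Or.inl ⟨q, hq, by omega, heq2⟩
            · right
              have eq1 : opm q 1 = q + 1 := hopm.2.1 q hq (by omega)
              have e3 : opm p (q + 1) = opm (opm p q) (p + 1) := by
                rw [← eq1, hopm.2.2.2 p q hp1 (by omega) hq (by omega),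
                  hopm.2.1 p hp1 hplt]
              have := laver_gt m opm hopm (opm p q) hb.1 hlt2 (p + 1) (by omega) (by omega)
              rw [e3]; omega
      rcases step (2 ^ m - p) (by omega) (by omega) with ⟨q', h1, h2', h3⟩ | hge
      · exact ⟨q', h1, by omega, h3⟩
      · have hb := hopm.1 p (2 ^ m - p) hp1 (by omega) (by omega) (by omega)
        exact ⟨2 ^ m - p, by omega, by omega, by omega⟩
  obtain ⟨q0, hq01, hq02, hq03⟩ := hexist
  have hper2m : per ≤ 2 ^ m := le_trans (hper.2 ⟨hq01, hq03⟩) hq02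
  -- dichotomy
  have hπp : laverPi m p = p := by unfold laverPi; split <;> omega
  have hdich : ∀ q, 1 ≤ q → q ≤ per →
      opn p q = opm p q ∨ opn p q = opm p q + 2 ^ m := by
    intro q hq1 hq2
    have hπq : laverPi m q = q := by unfold laverPi; split <;> omega
    have := laver_hom (m + 1) hn opn opm hopn hopm p hp1 (by omega) q hq1 (by omega)
    simp only [Nat.add_sub_cancel] at this
    rw [hπp, hπq] at this
    have hb := hopn.1 p q hp1 (by omega) hq1 (by omega)
    unfold laverPi at this
    split at this <;> omega
  -- once shifted, always shifted
  have hprop : ∀ q, 1 ≤ q → q < per → opn p q = opm p q + 2 ^ m →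
      opn p (q + 1) = opm p (q + 1) + 2 ^ m := by
    intro q hq1 hq2 hsh
    have hbm := hopm.1 p q hp1 (by omega) hq1 (by omega)
    have hne : opm p q ≠ 2 ^ m := by
      intro h; exact absurd (hper.2 ⟨hq1, h⟩) (by omega)
    have hXlt : opn p q < 2 ^ (m + 1) := by omega
    have eq1 : opn q 1 = q + 1 := hopn.2.1 q hq1 (by omega)
    have e3 : opn p (q + 1) = opn (opn p q) (p + 1) := by
      rw [← eq1, hopn.2.2.2 p q hp1 (by omega) hq1 (by omega),
        hopn.2.1 p hp1 (by omega)]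
    have hgt := laver_gt (m + 1) opn hopn (opn p q) (by omega) hXlt (p + 1) (by omega) (by omega)
    have hbm' := hopm.1 p (q + 1) hp1 (by omega) (by omega) (by omega)
    rcases hdich (q + 1) (by omega) (by omega) with hcase | hcase
    · rw [e3] at hcase; omega
    · exact hcase
  by_cases hS : ∃ q, 1 ≤ q ∧ q ≤ per ∧ opn p q = opm p q + 2 ^ m
  · set q0' := Nat.find hS with hq0'
    have hspec := Nat.find_spec hS
    refine ⟨q0' - 1, by omega, ?_, ?_⟩
    · intro q hq1 hq2
      have hqlt : q < q0' := by omega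
      have hmin := Nat.find_min hS hqlt
      have hqper : q ≤ per := by omega
      rcases hdich q hq1 hqper with h | h
      · exact h
      · exact absurd ⟨hq1, hqper, h⟩ hmin
    · intro q hq1 hq2
      have hq0le : q0' ≤ q := by omega
      clear hq1
      induction q, hq0le using Nat.le_induction with
      | base => exact hspec.2.2
      | succ q hq IH =>
        exact hprop q (by omega) (by omega) (IH (by omega))
  · refine ⟨per, le_rfl, ?_, ?_⟩
    · intro q hq1 hq2
      rcases hdich q hq1 hq2 with h | h
      · exact h
      · exact absurd ⟨q, hq1, hq2, h⟩ hS
    · intro q hq1 hq2; omega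
end

section
/- For every n ≥ 1 and all p, q in {1, …, 2^n}, the value p *_n q is odd if and only if p is even and q is odd. -/
/-- For `n ≥ 1`, the value `p *_n q` is odd if and only if `p` is even and `q` is odd. -/
theorem laver_odd_iff (n : ℕ) (hn : 1 ≤ n) (op : ℕ → ℕ → ℕ) (h : IsLaverOp n op)
    (p q : ℕ) (hp1 : 1 ≤ p) (hp2 : p ≤ 2 ^ n) (hq1 : 1 ≤ q) (hq2 : q ≤ 2 ^ n) :
    Odd (op p q) ↔ Even p ∧ Odd q := by
  obtain ⟨hrange, hsucc, htop, hdist⟩ := h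
  have hN1 : 1 ≤ 2 ^ n := Nat.one_le_two_pow
  have hNe : Even (2 ^ n) := (Nat.even_pow).mpr ⟨even_two, by omega⟩
  -- row 2^n is the identity
  have h2n : ∀ q, 1 ≤ q → q ≤ 2 ^ n → op (2 ^ n) q = q := by
    intro q hq1 hq2
    induction q, hq1 using Nat.le_induction with
    | base => exact htop
    | succ q hq1 ih =>
      have hqlt : q < 2 ^ n := by omega
      have hs : op q 1 = q + 1 := hsucc q hq1 hqlt
      calc op (2 ^ n) (q + 1) = op (2 ^ n) (op q 1) := by rw [hs]
        _ = op (op (2 ^ n) q) (op (2 ^ n) 1) := hdist _ _ hN1 le_rfl hq1 (by omega)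
        _ = op q 1 := by rw [ih (by omega), htop]
        _ = q + 1 := hs
  -- op p q > p for p < 2^n
  have hgt : ∀ k p, 2 ^ n - p ≤ k → 1 ≤ p → p < 2 ^ n →
      ∀ q, 1 ≤ q → q ≤ 2 ^ n → p < op p q := by
    intro k
    induction k with
    | zero => intro p hk hp1 hp2; omega
    | succ k ih =>
      intro p hk hp1 hp2 q hq1 hq2
      induction q, hq1 using Nat.le_induction with
      | base => rw [hsucc p hp1 hp2]; omega
      | succ q hq1 ihq =>
        have hqlt : q < 2 ^ n := by omega
        have hr := hrange p q hp1 (by omega) hq1 (by omega)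
        have hpr : p < op p q := ihq (by omega)
        have key : op p (q + 1) = op (op p q) (p + 1) := by
          rw [← hsucc q hq1 hqlt, hdist p q hp1 (by omega) hq1 (by omega), hsucc p hp1 hp2]
        rw [key]
        rcases eq_or_lt_of_le hr.2 with heq | hlt
        · rw [heq, h2n (p + 1) (by omega) (by omega)]; omega
        · have := ih (op p q) (by omega) (by omega) hlt (p + 1) (by omega) (by omega)
          omega
  -- main parity claim
  have hmain : ∀ k p, 2 ^ n - p ≤ k → 1 ≤ p → p ≤ 2 ^ n →
      ∀ q, 1 ≤ q → q ≤ 2 ^ n → (Odd (op p q) ↔ Even p ∧ Odd q) := by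
    intro k
    induction k with
    | zero =>
      intro p hk hp1 hp2 q hq1 hq2
      have : p = 2 ^ n := by omega
      subst this
      rw [h2n q hq1 hq2]
      simp only [Nat.even_iff, Nat.odd_iff] at *
      omega
    | succ k ih =>
      intro p hk hp1 hp2 q hq1 hq2
      rcases eq_or_lt_of_le hp2 with heq | hplt
      · subst heq
        rw [h2n q hq1 hq2]
        simp only [Nat.even_iff, Nat.odd_iff] at *
        omega
      · induction q, hq1 using Nat.le_induction with
        | base =>
          rw [hsucc p hp1 hplt]
          simp only [Nat.even_iff, Nat.odd_iff, and_true, true_and]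
          omega
        | succ q hq1 ihq =>
          have hqlt : q < 2 ^ n := by omega
          have hr := hrange p q hp1 (by omega) hq1 (by omega)
          have ihq' := ihq (by omega)
          have key : op p (q + 1) = op (op p q) (p + 1) := by
            rw [← hsucc q hq1 hqlt, hdist p q hp1 (by omega) hq1 (by omega), hsucc p hp1 hplt]
          rw [key]
          rcases eq_or_lt_of_le hr.2 with heq | hlt
          · rw [heq, h2n (p + 1) (by omega) (by omega)]
            rw [heq] at ihq'
            simp only [Nat.even_iff, Nat.odd_iff] at *
            omega
          · have hpr : p < op p q := hgt (k + 1) p hk hp1 hplt q hq1 (by omega)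
            have houter := ih (op p q) (by omega) (by omega) (by omega) (p + 1)
              (by omega) (by omega)
            rw [houter]
            simp only [Nat.even_iff, Nat.odd_iff] at *
            omega
  exact hmain (2 ^ n) p (by omega) hp1 hp2 q hq1 hq2
end

section
/- For every n ≥ 1, if φ is a ℤ-valued 2-cocycle for A_n satisfying φ(2^n − 1, y) = 0 for every y in {1, …, 2^n}, then φ(x, y) = 0 for all x, y in {1, …, 2^n}. -/
/-- `φ` is a `ℤ`-valued rack 2-cocycle for the Laver table `A_n` with operation `op`. -/
def Is2Cocycle (n : ℕ) (op : ℕ → ℕ → ℕ) (φ : ℕ → ℕ → ℤ) : Prop :=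
  ∀ x y z, 1 ≤ x → x ≤ 2 ^ n → 1 ≤ y → y ≤ 2 ^ n → 1 ≤ z → z ≤ 2 ^ n →
    φ (op x y) (op x z) + φ x z = φ x (op y z) + φ y z

/-- A 2-cocycle for `A_n` whose penultimate row vanishes is the zero cocycle. -/
theorem laver_two_cocycle_penultimate_row (n : ℕ) (hn : 1 ≤ n)
    (op : ℕ → ℕ → ℕ) (h : IsLaverOp n op)
    (φ : ℕ → ℕ → ℤ) (hφ : Is2Cocycle n op φ)
    (hrow : ∀ y, 1 ≤ y → y ≤ 2 ^ n → φ (2 ^ n - 1) y = 0) :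
    ∀ x y, 1 ≤ x → x ≤ 2 ^ n → 1 ≤ y → y ≤ 2 ^ n → φ x y = 0 := by
  obtain ⟨hrange, hsucc, htop, hlaw⟩ := h
  have hN : 2 ≤ 2 ^ n := by
    calc 2 = 2 ^ 1 := by norm_num
    _ ≤ 2 ^ n := Nat.pow_le_pow_right (by norm_num) hn
  -- row 2^n is the identity
  have hid : ∀ y, 1 ≤ y → y ≤ 2 ^ n → op (2 ^ n) y = y := by
    intro y
    induction y with
    | zero => omega
    | succ m ih =>
      intro _ hy
      rcases Nat.eq_zero_or_pos m with hm | hm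
      · subst hm; simpa using htop
      · have hmlt : m < 2 ^ n := by omega
        have h1 : op m 1 = m + 1 := hsucc m hm hmlt
        have h2 : op (2 ^ n) (op m 1) = op (op (2 ^ n) m) (op (2 ^ n) 1) :=
          hlaw (2 ^ n) m (by omega) le_rfl hm (le_of_lt hmlt)
        rw [h1, ih hm (le_of_lt hmlt), htop] at h2
        rw [h2, h1]
  -- row 2^n - 1 is constantly 2^n
  have hconst : ∀ y, 1 ≤ y → y ≤ 2 ^ n → op (2 ^ n - 1) y = 2 ^ n := by
    intro y
    induction y with
    | zero => omega
    | succ m ih =>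
      intro _ hy
      rcases Nat.eq_zero_or_pos m with hm | hm
      · subst hm
        have := hsucc (2 ^ n - 1) (by omega) (by omega)
        simpa [Nat.sub_add_cancel (by omega : 1 ≤ 2 ^ n)] using this
      · have hmlt : m < 2 ^ n := by omega
        have h1 : op m 1 = m + 1 := hsucc m hm hmlt
        have hsub : op (2 ^ n - 1) 1 = 2 ^ n := by
          have := hsucc (2 ^ n - 1) (by omega) (by omega)
          omega
        have h2 : op (2 ^ n - 1) (op m 1) = op (op (2 ^ n - 1) m) (op (2 ^ n - 1) 1) :=
          hlaw (2 ^ n - 1) m (by omega) (by omega) hm (le_of_lt hmlt)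
        rw [h1, ih hm (le_of_lt hmlt), hsub, hid (2 ^ n) (by omega) le_rfl] at h2
        exact h2
  -- all values equal φ(2^n, 2^n)
  have key : ∀ y z, 1 ≤ y → y ≤ 2 ^ n → 1 ≤ z → z ≤ 2 ^ n →
      φ y z = φ (2 ^ n) (2 ^ n) := by
    intro y z hy1 hy2 hz1 hz2
    have hc := hφ (2 ^ n - 1) y z (by omega) (by omega) hy1 hy2 hz1 hz2
    obtain ⟨hyz1, hyz2⟩ := hrange y z hy1 hy2 hz1 hz2
    rw [hconst y hy1 hy2, hconst z hz1 hz2, hrow z hz1 hz2,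
      hrow (op y z) hyz1 hyz2] at hc
    linarith
  have h0 : φ (2 ^ n) (2 ^ n) = 0 := by
    have h1 := key (2 ^ n - 1) 1 (by omega) (by omega) (by omega) (by omega)
    have h2 := hrow 1 (by omega) (by omega)
    linarith
  intro x y hx1 hx2 hy1 hy2
  rw [key x y hx1 hx2 hy1 hy2, h0]
end

section
/- For every n ≥ 0, every p in {1, …, 2^n}, and every natural number d such that 2^d divides p and 2^{d+1} does not divide p, the equality p *_n q = q holds for every q with 2^n − 2^d < q ≤ 2^n, and fails for every q with 1 ≤ q ≤ 2^n − 2^d. In particular, for q ≤ 2^{n-1} (with n ≥ 1), the equality p *_n q = q holds only for p = 2^n. -/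
namespace LaverAux

/-! ### Arithmetic helpers -/

lemma modeq_two_cases {M a b : ℕ} (hab : a ≡ b [MOD M]) (ha1 : 1 ≤ a) (ha2 : a ≤ 2 * M)
    (hb1 : 1 ≤ b) (hb2 : b ≤ M) : a = b ∨ a = b + M := by
  have hM : 0 < M := le_trans hb1 hb2
  -- reduce to the case a ≤ M via subtracting M
  have key : ∀ a' b' : ℕ, a' ≡ b' [MOD M] → 1 ≤ a' → a' ≤ M → 1 ≤ b' → b' ≤ M → a' = b' := by
    intro a' b' h' h1 h2 h3 h4
    have hmod : a' % M = b' % M := h'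
    rcases lt_or_eq_of_le h2 with h2' | h2' <;> rcases lt_or_eq_of_le h4 with h4' | h4'
    · rwa [Nat.mod_eq_of_lt h2', Nat.mod_eq_of_lt h4'] at hmod
    · rw [Nat.mod_eq_of_lt h2', h4', Nat.mod_self] at hmod; omega
    · rw [h2', Nat.mod_self, Nat.mod_eq_of_lt h4'] at hmod; omega
    · omega
  rcases le_or_gt a M with hle | hlt
  · exact Or.inl (key a b hab ha1 hle hb1 hb2)
  · right
    have h1 : a - M ≡ a [MOD M] := by
      refine (Nat.modEq_iff_dvd' (by omega)).2 ?_
      have : a - (a - M) = M := by omega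
      rw [this]
    have := key (a - M) b (h1.trans hab) (by omega) (by omega) hb1 hb2
    omega

lemma eq_of_modeq_range {M a b : ℕ} (hab : a ≡ b [MOD M]) (ha1 : 1 ≤ a) (ha2 : a ≤ M)
    (hb1 : 1 ≤ b) (hb2 : b ≤ M) : a = b := by
  rcases modeq_two_cases hab ha1 (by omega) hb1 hb2 with h | h
  · exact h
  · omega

lemma dvd_two_cases {M Z : ℕ} (hM : 0 < M) (hd : M ∣ Z) (h1 : 1 ≤ Z) (h2 : Z ≤ 2 * M) :
    Z = M ∨ Z = 2 * M := by
  have h3 : Z ≡ M [MOD M] := ((Nat.modEq_zero_iff_dvd).2 hd).trans ((Nat.modEq_zero_iff_dvd).2 dvd_rfl).symm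
  rcases modeq_two_cases h3 h1 h2 (by omega) (le_refl M) with h | h
  · exact Or.inl h
  · right; omega

lemma bar_modeq {M t : ℕ} (hM : 0 < M) (ht : 1 ≤ t) : (t - 1) % M + 1 ≡ t [MOD M] := by
  have h1 : (t - 1) % M ≡ t - 1 [MOD M] := Nat.mod_modEq _ _
  have h2 : (t - 1) % M + 1 ≡ (t - 1) + 1 [MOD M] := h1.add_right 1
  have : t - 1 + 1 = t := by omega
  rwa [this] at h2

lemma bar_range {M t : ℕ} (hM : 0 < M) : 1 ≤ (t - 1) % M + 1 ∧ (t - 1) % M + 1 ≤ M := by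
  constructor
  · omega
  · have := Nat.mod_lt (t - 1) hM
    omega

lemma bar_eq_self {M t : ℕ} (h1 : 1 ≤ t) (h2 : t ≤ M) : (t - 1) % M + 1 = t := by
  have : t - 1 < M := by omega
  rw [Nat.mod_eq_of_lt this]; omega

lemma bar_congr {M a b : ℕ} (hM : 0 < M) (hab : a ≡ b [MOD M]) (ha : 1 ≤ a) (hb : 1 ≤ b) :
    (a - 1) % M + 1 = (b - 1) % M + 1 := by
  refine eq_of_modeq_range ?_ (bar_range hM).1 (bar_range hM).2 (bar_range hM).1 (bar_range hM).2
  exact ((bar_modeq hM ha).trans hab).trans (bar_modeq hM hb).symm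

lemma pow2_dvd_of_lt {e a b : ℕ} (hd : e ∣ 2 ^ a) (hlt : e < 2 ^ (b + 1)) : e ∣ 2 ^ b := by
  obtain ⟨j, hj, rfl⟩ := (Nat.dvd_prime_pow Nat.prime_two).1 hd
  have : j < b + 1 := by
    by_contra hh
    push_neg at hh
    have : (2:ℕ) ^ (b + 1) ≤ 2 ^ j := Nat.pow_le_pow_right (by norm_num) hh
    omega
  exact pow_dvd_pow 2 (by omega)

/-! ### Basic facts about a Laver operation -/

variable {m : ℕ} {op : ℕ → ℕ → ℕ}

lemma lv_bounds (h : IsLaverOp m op) {x y : ℕ} (hx1 : 1 ≤ x) (hx2 : x ≤ 2 ^ m)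
    (hy1 : 1 ≤ y) (hy2 : y ≤ 2 ^ m) : 1 ≤ op x y ∧ op x y ≤ 2 ^ m :=
  h.1 x y hx1 hx2 hy1 hy2

lemma lv_succ (h : IsLaverOp m op) {x : ℕ} (hx1 : 1 ≤ x) (hx2 : x < 2 ^ m) :
    op x 1 = x + 1 := h.2.1 x hx1 hx2

lemma lv_id (h : IsLaverOp m op) : ∀ y, 1 ≤ y → y ≤ 2 ^ m → op (2 ^ m) y = y := by
  intro y hy1
  induction y, hy1 using Nat.le_induction with
  | base => intro _; exact h.2.2.1
  | succ y hy ih =>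
    intro hy2
    have hylt : y < 2 ^ m := by omega
    have h1 : op y 1 = y + 1 := lv_succ h hy hylt
    rw [← h1, h.2.2.2 (2 ^ m) y (Nat.one_le_two_pow) (le_refl _) hy (by omega),
      ih (by omega), h.2.2.1, h1]

lemma lv_step (h : IsLaverOp m op) {x q : ℕ} (hx1 : 1 ≤ x) (hx2 : x < 2 ^ m)
    (hq1 : 1 ≤ q) (hq2 : q < 2 ^ m) : op x (q + 1) = op (op x q) (x + 1) := by
  rw [← lv_succ h hq1 hq2, h.2.2.2 x q hx1 (by omega) hq1 (by omega), lv_succ h hx1 hx2]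

lemma lv_gt (h : IsLaverOp m op) :
    ∀ k x, 2 ^ m - x ≤ k → 1 ≤ x → x < 2 ^ m → ∀ y, 1 ≤ y → y ≤ 2 ^ m → x < op x y := by
  intro k
  induction k using Nat.strong_induction_on with
  | _ k ih =>
    intro x hk hx1 hx2 y hy1
    induction y, hy1 using Nat.le_induction with
    | base => intro _; rw [lv_succ h hx1 hx2]; omega
    | succ y hy ihy =>
      intro hy2
      have hylt : y < 2 ^ m := by omega
      have hZ := lv_bounds h hx1 (by omega) hy hylt.le
      rw [lv_step h hx1 hx2 hy hylt]
      have hxZ : x < op x y := ihy (by omega)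
      rcases lt_or_eq_of_le hZ.2 with hZ2 | hZ2
      · have := ih (2 ^ m - op x y) (by omega) (op x y) (le_refl _) hZ.1 hZ2 (x + 1)
          (by omega) (by omega)
        omega
      · rw [hZ2, lv_id h (x + 1) (by omega) (by omega)]
        omega

lemma lv_gt' (h : IsLaverOp m op) {x y : ℕ} (hx1 : 1 ≤ x) (hx2 : x < 2 ^ m)
    (hy1 : 1 ≤ y) (hy2 : y ≤ 2 ^ m) : x < op x y :=
  lv_gt h (2 ^ m - x) x (le_refl _) hx1 hx2 y hy1 hy2

lemma lv_fix (h : IsLaverOp m op) {x : ℕ} (hx1 : 1 ≤ x) (hx2 : x ≤ 2 ^ m) :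
    op x (2 ^ m) = 2 ^ m := by
  rcases lt_or_eq_of_le hx2 with hx2' | hx2'
  · have hax := h.2.2.2 x (2 ^ m) hx1 hx2 Nat.one_le_two_pow (le_refl _)
    rw [h.2.2.1, lv_succ h hx1 hx2'] at hax
    have hGb := lv_bounds h hx1 hx2 (Nat.one_le_two_pow) (le_refl (2 ^ m))
    have hxG : x < op x (2 ^ m) := lv_gt' h hx1 hx2' Nat.one_le_two_pow (le_refl _)
    rcases lt_or_eq_of_le hGb.2 with hG2 | hG2
    · exfalso
      have h3 := lv_gt' h hGb.1 hG2 (y := x + 1) (by omega) (by omega)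
      omega
    · exact hG2
  · rw [hx2']
    exact lv_id h (2 ^ m) Nat.one_le_two_pow (le_refl _)

/-! ### The period of a row -/

def lvP (op : ℕ → ℕ → ℕ) (m x : ℕ) : ℕ :=
  Nat.find (p := fun j => (1 ≤ j ∧ op x j = 2 ^ m) ∨ j = 2 ^ m) ⟨2 ^ m, Or.inr rfl⟩

lemma lvP_le (x : ℕ) : lvP op m x ≤ 2 ^ m := Nat.find_le (Or.inr rfl)

lemma lvP_pos (x : ℕ) : 1 ≤ lvP op m x := by
  have := Nat.find_spec (p := fun j => (1 ≤ j ∧ op x j = 2 ^ m) ∨ j = 2 ^ m) ⟨2 ^ m, Or.inr rfl⟩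
  rcases this with h | h
  · exact h.1
  · rw [show lvP op m x = 2 ^ m from h]; exact Nat.one_le_two_pow

lemma lvP_eq (h : IsLaverOp m op) {x : ℕ} (hx1 : 1 ≤ x) (hx2 : x ≤ 2 ^ m) :
    op x (lvP op m x) = 2 ^ m := by
  have := Nat.find_spec (p := fun j => (1 ≤ j ∧ op x j = 2 ^ m) ∨ j = 2 ^ m) ⟨2 ^ m, Or.inr rfl⟩
  rcases this with hh | hh
  · exact hh.2
  · rw [show lvP op m x = 2 ^ m from hh]; exact lv_fix h hx1 hx2

lemma lvP_min {x j : ℕ} (hj : j < lvP op m x) (hj1 : 1 ≤ j) : op x j ≠ 2 ^ m := by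
  have := Nat.find_min (p := fun j => (1 ≤ j ∧ op x j = 2 ^ m) ∨ j = 2 ^ m)
    ⟨2 ^ m, Or.inr rfl⟩ hj
  intro hc
  exact this (Or.inl ⟨hj1, hc⟩)

lemma lvP_min' {x j : ℕ} (h1 : 1 ≤ j) (h2 : op x j = 2 ^ m) : lvP op m x ≤ j :=
  Nat.find_le (Or.inl ⟨h1, h2⟩)

lemma lv_per (h : IsLaverOp m op) {x : ℕ} (hx1 : 1 ≤ x) (hx2 : x < 2 ^ m) :
    ∀ j, 1 ≤ j → j + lvP op m x ≤ 2 ^ m → op x (j + lvP op m x) = op x j := by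
  intro j hj1
  induction j, hj1 using Nat.le_induction with
  | base =>
    intro hle
    have hP1 := lvP_pos (op := op) (m := m) x
    have hPlt : lvP op m x < 2 ^ m := by omega
    rw [show 1 + lvP op m x = lvP op m x + 1 by omega,
      lv_step h hx1 hx2 hP1 hPlt, lvP_eq h hx1 (by omega),
      lv_id h (x + 1) (by omega) (by omega), lv_succ h hx1 hx2]
  | succ j hj ih =>
    intro hle
    have hP1 := lvP_pos (op := op) (m := m) x
    rw [show j + 1 + lvP op m x = (j + lvP op m x) + 1 by omega,
      lv_step h hx1 hx2 (by omega) (by omega), ih (by omega),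
      ← lv_step h hx1 hx2 hj (by omega)]

lemma lv_per_mul (h : IsLaverOp m op) {x : ℕ} (hx1 : 1 ≤ x) (hx2 : x < 2 ^ m) :
    ∀ k j, 1 ≤ j → j + k * lvP op m x ≤ 2 ^ m → op x (j + k * lvP op m x) = op x j := by
  intro k
  induction k with
  | zero => intro j h1 h2; simp
  | succ k ih =>
    intro j h1 h2
    have hP1 := lvP_pos (op := op) (m := m) x
    have hmul : (k + 1) * lvP op m x = k * lvP op m x + lvP op m x := by ring
    have h3 : j + (k + 1) * lvP op m x = (j + k * lvP op m x) + lvP op m x := by omega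
    rw [h3, lv_per h hx1 hx2 (j + k * lvP op m x) (by omega) (by omega)]
    exact ih j h1 (by omega)

lemma lv_hit (h : IsLaverOp m op) {x : ℕ} (hx1 : 1 ≤ x) (hx2 : x < 2 ^ m) :
    ∀ k, 1 ≤ k → k * lvP op m x ≤ 2 ^ m → op x (k * lvP op m x) = 2 ^ m := by
  intro k hk1 hk2
  have hP1 := lvP_pos (op := op) (m := m) x
  have hmul : k * lvP op m x = lvP op m x + (k - 1) * lvP op m x := by
    have hk : k = (k - 1) + 1 := by omega
    conv_lhs => rw [hk]
    ring
  rw [hmul, lv_per_mul h hx1 hx2 (k - 1) (lvP op m x) (by omega) (by omega)]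
  exact lvP_eq h hx1 (by omega)

lemma lv_dvd (h : IsLaverOp m op) {x : ℕ} (hx1 : 1 ≤ x) (hx2 : x < 2 ^ m) :
    ∀ j, 1 ≤ j → j ≤ 2 ^ m → op x j = 2 ^ m → lvP op m x ∣ j := by
  intro j hj1 hj2 hj3
  have hP1 : 1 ≤ lvP op m x := lvP_pos x
  have hmod := Nat.div_add_mod j (lvP op m x)
  have hmul : lvP op m x * (j / lvP op m x) = (j / lvP op m x) * lvP op m x := by ring
  rcases Nat.eq_zero_or_pos (j % lvP op m x) with h0 | hpos
  · exact Nat.dvd_of_mod_eq_zero h0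
  · exfalso
    have hslt : j % lvP op m x < lvP op m x := Nat.mod_lt j (by omega)
    rcases Nat.eq_zero_or_pos (j / lvP op m x) with hk0 | hkpos
    · have h5 : lvP op m x * (j / lvP op m x) = 0 := by rw [hk0, mul_zero]
      have hjs : j = j % lvP op m x := by omega
      have h4 : op x (j % lvP op m x) = 2 ^ m := by rw [← hjs]; exact hj3
      exact lvP_min hslt hpos h4
    · have hjs : j = j % lvP op m x + (j / lvP op m x) * lvP op m x := by omega
      have h4 : op x (j % lvP op m x + (j / lvP op m x) * lvP op m x) = 2 ^ m := by
        rw [← hjs]; exact hj3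
      have hble : j % lvP op m x + (j / lvP op m x) * lvP op m x ≤ 2 ^ m := by
        rw [← hjs]; exact hj2
      rw [lv_per_mul h hx1 hx2 _ _ hpos hble] at h4
      exact lvP_min hslt hpos h4

lemma lv_P_dvd_pow (h : IsLaverOp m op) {x : ℕ} (hx1 : 1 ≤ x) (hx2 : x < 2 ^ m) :
    lvP op m x ∣ 2 ^ m :=
  lv_dvd h hx1 hx2 (2 ^ m) Nat.one_le_two_pow (le_refl _) (lv_fix h hx1 (by omega))

lemma lv_grow (h : IsLaverOp m op) {x : ℕ} (hx1 : 1 ≤ x) (hx2 : x < 2 ^ m) :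
    ∀ j, 1 ≤ j → j ≤ 2 ^ m → (∀ i, 1 ≤ i → i ≤ j → op x i < 2 ^ m) → x + j ≤ op x j := by
  intro j hj1
  induction j, hj1 using Nat.le_induction with
  | base => intro _ _; rw [lv_succ h hx1 hx2]
  | succ j hj ih =>
    intro hj2 hall
    have hZ := lv_bounds h hx1 (by omega) hj (by omega)
    have hZlt : op x j < 2 ^ m := hall j hj (by omega)
    have hZge : x + j ≤ op x j := ih (by omega) (fun i h1 h2 => hall i h1 (by omega))
    rw [lv_step h hx1 hx2 hj (by omega)]
    have := lv_gt' h hZ.1 hZlt (y := x + 1) (by omega) (by omega)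
    omega

lemma lv_P_le (h : IsLaverOp m op) {x : ℕ} (hx1 : 1 ≤ x) (hx2 : x < 2 ^ m) :
    lvP op m x ≤ 2 ^ m - x := by
  by_contra hc
  push_neg at hc
  have hall : ∀ i, 1 ≤ i → i ≤ 2 ^ m - x → op x i < 2 ^ m := by
    intro i h1 h2
    have hb := lv_bounds h hx1 (by omega) h1 (by omega)
    have := lvP_min (op := op) (m := m) (x := x) (j := i) (by omega) h1
    omega
  have := lv_grow h hx1 hx2 (2 ^ m - x) (by omega) (by omega) hall
  have := hall (2 ^ m - x) (by omega) (le_refl _)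
  omega

lemma lv_strict (h : IsLaverOp m op) {x : ℕ} (hx1 : 1 ≤ x) (hx2 : x < 2 ^ m) :
    ∀ i j, 1 ≤ i → i < j → j ≤ lvP op m x → op x i < op x j := by
  have hstep : ∀ j, 1 ≤ j → j + 1 ≤ lvP op m x → op x j < op x (j + 1) := by
    intro j h1 h2
    have hPle := lvP_le (op := op) (m := m) x
    have hZ := lv_bounds h hx1 (by omega) h1 (by omega)
    have hZne := lvP_min (op := op) (m := m) (x := x) (j := j) (by omega) h1
    have hZlt : op x j < 2 ^ m := by omega
    rw [lv_step h hx1 hx2 h1 (by omega)]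
    exact lv_gt' h hZ.1 hZlt (y := x + 1) (by omega) (by omega)
  intro i j hi1 hij
  have hij' : i + 1 ≤ j := hij
  induction j, hij' using Nat.le_induction with
  | base => intro hle; exact hstep i hi1 hle
  | succ j hj ih =>
    intro hle
    have h1 : op x i < op x j := ih (by omega) (by omega)
    have h2 : op x j < op x (j + 1) := hstep j (by omega) hle
    omega

/-! ### Level k+1 facts involving the half-point 2^k -/

lemma lv_P_dvd_half {k : ℕ} (h : IsLaverOp (k + 1) op) {x : ℕ} (hx1 : 1 ≤ x)
    (hx2 : x < 2 ^ (k + 1)) : lvP op (k + 1) x ∣ 2 ^ k := by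
  apply pow2_dvd_of_lt (lv_P_dvd_pow h hx1 hx2)
  have := lv_P_le h hx1 hx2
  omega

lemma lv_col {k : ℕ} (h : IsLaverOp (k + 1) op) {x r : ℕ} (hx1 : 1 ≤ x)
    (hx2 : x < 2 ^ (k + 1)) (hr1 : 1 ≤ r) (hr2 : r ≤ 2 ^ k) :
    op x (r + 2 ^ k) = op x r := by
  have hdvd := lv_P_dvd_half h hx1 hx2
  obtain ⟨t, ht⟩ := hdvd
  have hP1 := lvP_pos (op := op) (m := k + 1) x
  have ht1 : 1 ≤ t := by
    rcases Nat.eq_zero_or_pos t with h0 | h1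
    · exfalso; rw [h0, mul_zero] at ht; have := Nat.one_le_two_pow (n := k); omega
    · exact h1
  have h2 : r + 2 ^ k = r + t * lvP op (k + 1) x := by rw [ht]; ring_nf
  rw [h2, lv_per_mul h hx1 hx2 t r hr1 (by rw [← h2]; have : (2:ℕ) ^ (k+1) = 2 ^ k * 2 := pow_succ 2 k; omega)]

lemma lv_col' {k : ℕ} (h : IsLaverOp (k + 1) op) {x u v : ℕ} (hx1 : 1 ≤ x)
    (hx2 : x < 2 ^ (k + 1)) (hu1 : 1 ≤ u) (hu2 : u ≤ 2 ^ (k + 1)) (hv1 : 1 ≤ v)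
    (hv2 : v ≤ 2 ^ (k + 1)) (huv : u ≡ v [MOD 2 ^ k]) : op x u = op x v := by
  have h2k : (2:ℕ) ^ (k + 1) = 2 * 2 ^ k := by rw [pow_succ]; ring
  have hM : (0:ℕ) < 2 ^ k := Nat.one_le_two_pow
  have hbar : ∀ w, 1 ≤ w → w ≤ 2 ^ (k + 1) → op x w = op x ((w - 1) % 2 ^ k + 1) := by
    intro w h1 h2
    rcases modeq_two_cases (bar_modeq hM h1).symm h1 (by omega) (bar_range (t := w) hM).1
      (bar_range (t := w) hM).2 with he | he
    · exact congrArg (op x) he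
    · conv_lhs => rw [he]
      exact lv_col h hx1 hx2 (bar_range hM).1 (bar_range hM).2
  rw [hbar u hu1 hu2, hbar v hv1 hv2, bar_congr hM huv hu1 hv1]

lemma lv_rowM {k : ℕ} (h : IsLaverOp (k + 1) op) :
    ∀ q, 1 ≤ q → q ≤ 2 ^ k → op (2 ^ k) q = 2 ^ k + q := by
  have h2k : (2:ℕ) ^ (k + 1) = 2 * 2 ^ k := by rw [pow_succ]; ring
  have hM : (0:ℕ) < 2 ^ k := Nat.one_le_two_pow
  intro q hq1
  induction q, hq1 using Nat.le_induction with
  | base => intro _; exact lv_succ h hM (by omega)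
  | succ q hq ih =>
    intro hq2
    rw [lv_step h hM (by omega) hq (by omega), ih (by omega)]
    have hrow1 : 1 ≤ 2 ^ k + q := by omega
    have hrow2 : 2 ^ k + q < 2 ^ (k + 1) := by omega
    rw [show 2 ^ k + 1 = 1 + 2 ^ k by omega, lv_col h hrow1 hrow2 (le_refl 1) hM,
      lv_succ h hrow1 hrow2]
    omega

lemma lv_rowM' {k : ℕ} (h : IsLaverOp (k + 1) op) :
    ∀ q, 2 ^ k < q → q ≤ 2 ^ (k + 1) → op (2 ^ k) q = q := by
  have h2k : (2:ℕ) ^ (k + 1) = 2 * 2 ^ k := by rw [pow_succ]; ring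
  have hM : (0:ℕ) < 2 ^ k := Nat.one_le_two_pow
  intro q hq1 hq2
  have : q = (q - 2 ^ k) + 2 ^ k := by omega
  rw [this, lv_col h hM (by omega) (by omega) (by omega),
    lv_rowM h (q - 2 ^ k) (by omega) (by omega)]
  omega

lemma lv_rowcongr {k : ℕ} (h : IsLaverOp (k + 1) op) :
    ∀ t x, 2 ^ k - x ≤ t → 1 ≤ x → x ≤ 2 ^ k → ∀ q, 1 ≤ q → q ≤ 2 ^ (k + 1) →
      op (x + 2 ^ k) q ≡ op x q [MOD 2 ^ k] := by
  have h2k : (2:ℕ) ^ (k + 1) = 2 * 2 ^ k := by rw [pow_succ]; ring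
  have hM : (0:ℕ) < 2 ^ k := Nat.one_le_two_pow
  intro t
  induction t using Nat.strong_induction_on with
  | _ t ih =>
    intro x ht hx1 hx2
    rcases lt_or_eq_of_le hx2 with hxlt | hxeq
    · -- x < 2^k
      intro q hq1
      induction q, hq1 using Nat.le_induction with
      | base =>
        intro _
        rw [lv_succ h (by omega) (by omega), lv_succ h hx1 (by omega)]
        exact (Nat.add_modEq_right (n := 2 ^ k) (a := x)).add_right 1
      | succ q hq ihq =>
        intro hq2
        have hqlt : q < 2 ^ (k + 1) := by omega
        have hZ'b := lv_bounds h (x := x + 2 ^ k) (y := q) (by omega) (by omega) hq (by omega)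
        have hZb := lv_bounds h (x := x) (y := q) hx1 (by omega) hq (by omega)
        have ihq' : op (x + 2 ^ k) q ≡ op x q [MOD 2 ^ k] := ihq (by omega)
        rw [lv_step h (x := x + 2 ^ k) (by omega) (by omega) hq hqlt,
          lv_step h (x := x) hx1 (by omega) hq hqlt]
        set Z' := op (x + 2 ^ k) q with hZ'def
        set Z := op x q with hZdef
        rcases lt_or_eq_of_le hZ'b.2 with hZ'lt | hZ'top
        · -- Z' < 2^(k+1)
          have hcol : op Z' (x + 2 ^ k + 1) = op Z' (x + 1) := by
            rw [show x + 2 ^ k + 1 = (x + 1) + 2 ^ k by omega]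
            exact lv_col h hZ'b.1 hZ'lt (by omega) (by omega)
          rw [hcol]
          have hZ'gt : x + 2 ^ k < Z' := lv_gt' h (by omega) (by omega) hq (by omega)
          have hZgt : x < Z := lv_gt' h hx1 (by omega) hq (by omega)
          rcases modeq_two_cases (a := Z') (b := Z' - 2 ^ k)
            (by have : Z' - 2 ^ k + 2 ^ k = Z' := by omega
                conv_lhs => rw [← this]
                exact Nat.add_modEq_right)
            hZ'b.1 (by omega) (by omega) (by omega) with he | he
          · omega  -- Z' = Z' - 2^k impossible since Z' > 2^k
          · -- Z' = (Z' - 2^k) + 2^k ; compare Z with Z' - 2^k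
            have hw : Z ≡ Z' - 2 ^ k [MOD 2 ^ k] := by
              have h1 : Z' ≡ Z' - 2 ^ k [MOD 2 ^ k] := by
                conv_lhs => rw [he]
                exact Nat.add_modEq_right
              exact (ihq'.symm.trans h1)
            rcases modeq_two_cases (a := Z) (b := Z' - 2 ^ k) hw hZb.1 (by omega)
              (by omega) (by omega) with hZe | hZe
            · -- Z = Z' - 2^k : use outer IH on row Z
              have hrec := ih (2 ^ k - Z) (by omega) Z (le_refl _) hZb.1 (by omega)
                (x + 1) (by omega) (by omega)
              rw [← hZe] at he
              rw [he]
              exact hrec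
            · -- Z = Z' : same row
              have : Z = Z' := by omega
              rw [this]
        · -- Z' = 2^(k+1)
          rw [hZ'top, lv_id h (x + 2 ^ k + 1) (by omega) (by omega)]
          have hZ0 : 2 ^ k ∣ Z := by
            have h1 : Z ≡ Z' [MOD 2 ^ k] := ihq'.symm
            rw [hZ'top] at h1
            have h2 : (2:ℕ) ^ (k + 1) ≡ 0 [MOD 2 ^ k] :=
              (Nat.modEq_zero_iff_dvd).2 ⟨2, by omega⟩
            exact (Nat.modEq_zero_iff_dvd).1 (h1.trans h2)
          rcases dvd_two_cases hM hZ0 hZb.1 (by omega) with hZe | hZe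
          · rw [hZe, lv_rowM h (x + 1) (by omega) (by omega)]
            have e : x + 2 ^ k + 1 = 2 ^ k + (x + 1) := by omega
            rw [e]
          · rw [hZe, show 2 * 2 ^ k = 2 ^ (k + 1) by omega,
              lv_id h (x + 1) (by omega) (by omega)]
            have e : x + 2 ^ k + 1 = (x + 1) + 2 ^ k := by omega
            rw [e]
            exact (Nat.add_modEq_right (n := 2 ^ k) (a := x + 1))
    · -- x = 2^k : rows 2^k and 2^(k+1)
      intro q hq1 hq2
      rw [hxeq, show (2:ℕ) ^ k + 2 ^ k = 2 ^ (k + 1) by omega, lv_id h q hq1 hq2]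
      rcases le_or_gt q (2 ^ k) with hle | hlt
      · rw [lv_rowM h q hq1 hle]
        exact (Nat.add_modEq_left (n := 2 ^ k) (a := q)).symm
      · rw [lv_rowM' h q hlt hq2]

lemma lv_rowcongr' {k : ℕ} (h : IsLaverOp (k + 1) op) {x₁ x₂ w : ℕ}
    (h11 : 1 ≤ x₁) (h12 : x₁ ≤ 2 ^ (k + 1)) (h21 : 1 ≤ x₂) (h22 : x₂ ≤ 2 ^ (k + 1))
    (hw1 : 1 ≤ w) (hw2 : w ≤ 2 ^ (k + 1)) (hx : x₁ ≡ x₂ [MOD 2 ^ k]) :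
    op x₁ w ≡ op x₂ w [MOD 2 ^ k] := by
  have h2k : (2:ℕ) ^ (k + 1) = 2 * 2 ^ k := by rw [pow_succ]; ring
  have hM : (0:ℕ) < 2 ^ k := Nat.one_le_two_pow
  have hone : ∀ x, 1 ≤ x → x ≤ 2 ^ (k + 1) →
      op x w ≡ op ((x - 1) % 2 ^ k + 1) w [MOD 2 ^ k] := by
    intro x h1 h2
    rcases modeq_two_cases (bar_modeq hM h1).symm h1 (by omega) (bar_range (t := x) hM).1
      (bar_range (t := x) hM).2 with he | he
    · rw [← he]
    · conv_lhs => rw [he]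
      exact lv_rowcongr h (2 ^ k) _ (by omega) (bar_range hM).1 (bar_range hM).2 w hw1 hw2
  have e := bar_congr hM hx h11 h21
  calc op x₁ w ≡ op ((x₁ - 1) % 2 ^ k + 1) w [MOD 2 ^ k] := hone x₁ h11 h12
    _ = op ((x₂ - 1) % 2 ^ k + 1) w := by rw [e]
    _ ≡ op x₂ w [MOD 2 ^ k] := (hone x₂ h21 h22).symm

/-- The quotient operation to the previous level. -/
def lvQ (op : ℕ → ℕ → ℕ) (n : ℕ) : ℕ → ℕ → ℕ := fun x y => (op x y - 1) % 2 ^ n + 1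

lemma lvQ_range {n : ℕ} (op : ℕ → ℕ → ℕ) (hM : (0:ℕ) < 2 ^ n) (x y : ℕ) :
    1 ≤ lvQ op n x y ∧ lvQ op n x y ≤ 2 ^ n := bar_range hM

lemma lvQ_modeq {n : ℕ} (op : ℕ → ℕ → ℕ) (hM : (0:ℕ) < 2 ^ n) {x y : ℕ}
    (h1 : 1 ≤ op x y) : lvQ op n x y ≡ op x y [MOD 2 ^ n] := bar_modeq hM h1

theorem laver_thm : ∀ m op, IsLaverOp m op → ∀ p, 1 ≤ p → p ≤ 2 ^ m →
    ∀ d, 2 ^ d ∣ p → ¬ 2 ^ (d + 1) ∣ p → ∀ q, 1 ≤ q → q ≤ 2 ^ m →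
    (op p q = q ↔ 2 ^ m - 2 ^ d < q) := by
  intro m
  induction m with
  | zero =>
    intro op h p hp1 hp2 d hd hd' q hq1 hq2
    have h0 : (2:ℕ) ^ 0 = 1 := pow_zero 2
    have hdp : (1:ℕ) ≤ 2 ^ d := Nat.one_le_two_pow
    have hp : p = 1 := by omega
    have hq : q = 1 := by omega
    subst hp; subst hq
    constructor
    · intro _; omega
    · intro _
      have : op (2 ^ 0) 1 = 1 := h.2.2.1
      rwa [h0] at this
  | succ n ih =>
    intro op h p hp1 hp2 d hd hd' q hq1 hq2
    have hN2 : (2:ℕ) ^ (n + 1) = 2 * 2 ^ n := by rw [pow_succ]; ring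
    have hM1 : (1:ℕ) ≤ 2 ^ n := Nat.one_le_two_pow
    have hMpos : (0:ℕ) < 2 ^ n := hM1
    have hd1 : (1:ℕ) ≤ 2 ^ d := Nat.one_le_two_pow
    rcases lt_or_eq_of_le hp2 with hplt | hpeq
    · -- p < 2^(n+1)
      have hdn : d ≤ n := by
        have h1 : (2:ℕ) ^ d ≤ p := Nat.le_of_dvd (by omega) hd
        by_contra hc; push_neg at hc
        have : (2:ℕ) ^ (n + 1) ≤ 2 ^ d := Nat.pow_le_pow_right (by norm_num) hc
        omega
      have hd2d : (2:ℕ) ^ d ≤ 2 ^ n := Nat.pow_le_pow_right (by norm_num) hdn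
      -- the quotient operation is a Laver operation at level n
      have h'bounds : ∀ x y, 1 ≤ x → x ≤ 2 ^ n → 1 ≤ y → y ≤ 2 ^ n →
          1 ≤ lvQ op n x y ∧ lvQ op n x y ≤ 2 ^ n := by
        intro x y _ _ _ _
        exact ⟨(bar_range hMpos).1, (bar_range hMpos).2⟩
      have h'succ : ∀ x, 1 ≤ x → x < 2 ^ n → lvQ op n x 1 = x + 1 := by
        intro x h1 h2
        show (op x 1 - 1) % 2 ^ n + 1 = x + 1
        rw [lv_succ h h1 (by omega)]
        exact bar_eq_self (by omega) (by omega)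
      have h'top : lvQ op n (2 ^ n) 1 = 1 := by
        show (op (2 ^ n) 1 - 1) % 2 ^ n + 1 = 1
        rw [lv_succ h hM1 (by omega), show 2 ^ n + 1 - 1 = 2 ^ n from by omega, Nat.mod_self]
      have h'ld : ∀ x y, 1 ≤ x → x ≤ 2 ^ n → 1 ≤ y → y ≤ 2 ^ n →
          lvQ op n x (lvQ op n y 1) = lvQ op n (lvQ op n x y) (lvQ op n x 1) := by
        intro x y hx1 hx2 hy1 hy2
        have hub := lv_bounds h (x := y) (y := 1) hy1 (by omega) (le_refl 1) (by omega)
        have hZb := lv_bounds h (x := x) (y := y) hx1 (by omega) hy1 (by omega)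
        have hWb := lv_bounds h (x := x) (y := 1) hx1 (by omega) (le_refl 1) (by omega)
        have hQ1 := lvQ_range (n := n) op hMpos y 1
        have hQ2 := lvQ_range (n := n) op hMpos x y
        have hQ3 := lvQ_range (n := n) op hMpos x 1
        have hL : lvQ op n x (lvQ op n y 1) = (op x (op y 1) - 1) % 2 ^ n + 1 := by
          show (op x (lvQ op n y 1) - 1) % 2 ^ n + 1 = _
          have e : op x (lvQ op n y 1) = op x (op y 1) :=
            lv_col' h hx1 (by omega) (bar_range hMpos).1 (by omega) hub.1 hub.2
              (bar_modeq hMpos hub.1)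
          rw [e]
        have hR : lvQ op n (lvQ op n x y) (lvQ op n x 1) =
            (op (op x y) (op x 1) - 1) % 2 ^ n + 1 := by
          show (op (lvQ op n x y) (lvQ op n x 1) - 1) % 2 ^ n + 1 = _
          have e1 : op (lvQ op n x y) (lvQ op n x 1) = op (lvQ op n x y) (op x 1) :=
            lv_col' h (bar_range hMpos).1 (by omega) (bar_range hMpos).1 (by omega)
              hWb.1 hWb.2 (bar_modeq hMpos hWb.1)
          have e2 : op (lvQ op n x y) (op x 1) ≡ op (op x y) (op x 1) [MOD 2 ^ n] :=
            lv_rowcongr' h (bar_range hMpos).1 (by omega) hZb.1 hZb.2 hWb.1 hWb.2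
              (bar_modeq hMpos hZb.1)
          have hA := lv_bounds h (x := lvQ op n x y) (y := op x 1) (bar_range hMpos).1
            (by omega) hWb.1 hWb.2
          have hB := lv_bounds h (x := op x y) (y := op x 1) hZb.1 hZb.2 hWb.1 hWb.2
          rw [e1]
          exact bar_congr hMpos e2 hA.1 hB.1
        rw [hL, hR]
        exact congrArg (fun t => (t - 1) % 2 ^ n + 1)
          (h.2.2.2 x y hx1 (by omega) hy1 (by omega))
      have h' : IsLaverOp n (lvQ op n) := ⟨h'bounds, h'succ, h'top, h'ld⟩
      -- reduced row pb
      have hpbar : ∃ pb, 1 ≤ pb ∧ pb ≤ 2 ^ n ∧ p ≡ pb [MOD 2 ^ n] ∧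
          2 ^ d ∣ pb ∧ ¬ 2 ^ (d + 1) ∣ pb := by
        rcases le_or_gt p (2 ^ n) with hle | hlt
        · exact ⟨p, hp1, hle, Nat.ModEq.refl p, hd, hd'⟩
        · have hdn' : d + 1 ≤ n := by
            by_contra hc; push_neg at hc
            have hdd : d = n := by omega
            rw [hdd] at hd
            obtain ⟨t, ht⟩ := hd
            have h1 : 2 ^ n < 2 ^ n * t := by omega
            have h2 : 1 < t := by
              rcases le_or_gt t 1 with h3 | h3
              · exfalso
                rcases Nat.le_one_iff_eq_zero_or_eq_one.1 h3 with h4 | h4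
                · rw [h4, mul_zero] at ht; omega
                · rw [h4, mul_one] at ht; omega
              · exact h3
            have h4 : 2 ^ n * 2 ≤ 2 ^ n * t := Nat.mul_le_mul_left _ h2
            have h5 : 2 ^ n * 2 = 2 * 2 ^ n := by ring
            omega
          refine ⟨p - 2 ^ n, by omega, by omega, ?_, ?_, ?_⟩
          · exact ((Nat.modEq_iff_dvd' (by omega)).2 ⟨1, by omega⟩).symm
          · exact Nat.dvd_sub hd (pow_dvd_pow 2 hdn)
          · intro hc
            apply hd'
            have e : p = (p - 2 ^ n) + 2 ^ n := by omega
            rw [e]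
            exact dvd_add hc (pow_dvd_pow 2 hdn')
      obtain ⟨pb, hpb1, hpb2, hpbe, hpbd, hpbd'⟩ := hpbar
      have IH : ∀ w, 1 ≤ w → w ≤ 2 ^ n → (lvQ op n pb w = w ↔ 2 ^ n - 2 ^ d < w) :=
        ih (lvQ op n) h' pb hpb1 hpb2 d hpbd hpbd'
      have CC : ∀ w, 1 ≤ w → w ≤ 2 ^ n → op p w ≡ lvQ op n pb w [MOD 2 ^ n] := by
        intro w h1 h2
        have c1 : op p w ≡ op pb w [MOD 2 ^ n] :=
          lv_rowcongr' h hp1 hp2 hpb1 (by omega) h1 (by omega) hpbe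
        have hb := lv_bounds h hpb1 (by omega) h1 (by omega)
        exact c1.trans (bar_modeq hMpos hb.1).symm
      have CRUX : ∀ i, i < 2 ^ d → op p (2 ^ n - i) = 2 ^ (n + 1) - i := by
        intro i
        induction i with
        | zero =>
          intro _
          simp only [Nat.sub_zero]
          obtain ⟨t, ht⟩ := lv_P_dvd_half h hp1 hplt
          have hP1 := lvP_pos (op := op) (m := n + 1) p
          have ht1 : 1 ≤ t := by
            rcases Nat.eq_zero_or_pos t with h0 | h1
            · exfalso; rw [h0, mul_zero] at ht; omega
            · exact h1
          have e1 : (2:ℕ) ^ n = t * lvP op (n + 1) p := by rw [ht, mul_comm]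
          have h2 := lv_hit h hp1 hplt t ht1 (by rw [← e1]; omega)
          rw [← e1] at h2
          omega
        | succ i ihi =>
          intro hi
          have hiprev := ihi (by omega)
          have hr1 : 1 ≤ 2 ^ n - (i + 1) := by omega
          have hfix : lvQ op n pb (2 ^ n - (i + 1)) = 2 ^ n - (i + 1) :=
            (IH (2 ^ n - (i + 1)) hr1 (by omega)).2 (by omega)
          have hcc := CC (2 ^ n - (i + 1)) hr1 (by omega)
          rw [hfix] at hcc
          have hb := lv_bounds h hp1 hp2 hr1 (by omega)
          rcases modeq_two_cases hcc hb.1 (by omega) hr1 (by omega) with he | he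
          · exfalso
            have hstep := lv_step h (x := p) (q := 2 ^ n - (i + 1)) hp1 hplt hr1 (by omega)
            rw [he] at hstep
            have e2 : 2 ^ n - (i + 1) + 1 = 2 ^ n - i := by omega
            rw [e2, hiprev] at hstep
            -- hstep : 2^(n+1) - i = op (2^n - (i+1)) (p + 1)
            have hrlt : 2 ^ n - (i + 1) < 2 ^ n := by omega
            have hrho := lv_P_le h' (x := 2 ^ n - (i + 1)) hr1 hrlt
            have hrhodvd := lv_P_dvd_pow h' hr1 hrlt
            have hrhopos := lvP_pos (op := lvQ op n) (m := n) (2 ^ n - (i + 1))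
            have hρle : lvP (lvQ op n) n (2 ^ n - (i + 1)) ≤ 2 ^ n := lvP_le _
            have hPr_pos := lvP_pos (op := op) (m := n + 1) (2 ^ n - (i + 1))
            have hPr_le : lvP op (n + 1) (2 ^ n - (i + 1)) ≤
                2 * lvP (lvQ op n) n (2 ^ n - (i + 1)) := by
              have h5 : lvQ op n (2 ^ n - (i + 1)) (lvP (lvQ op n) n (2 ^ n - (i + 1))) =
                  2 ^ n := lvP_eq h' hr1 (by omega)
              have hbb := lv_bounds h hr1 (by omega) hrhopos (by omega)
              have h6 : lvQ op n (2 ^ n - (i + 1)) (lvP (lvQ op n) n (2 ^ n - (i + 1))) ≡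
                  op (2 ^ n - (i + 1)) (lvP (lvQ op n) n (2 ^ n - (i + 1))) [MOD 2 ^ n] :=
                bar_modeq hMpos hbb.1
              rw [h5] at h6
              have h7 : 2 ^ n ∣ op (2 ^ n - (i + 1)) (lvP (lvQ op n) n (2 ^ n - (i + 1))) :=
                (Nat.modEq_zero_iff_dvd).1 (h6.symm.trans ((Nat.modEq_zero_iff_dvd).2 dvd_rfl))
              rcases dvd_two_cases hMpos h7 hbb.1 (by omega) with h9 | h9
              · by_contra hcon
                push_neg at hcon
                have hρhalf : 2 * lvP (lvQ op n) n (2 ^ n - (i + 1)) ≤ 2 ^ n := by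
                  obtain ⟨j, hjle, hje⟩ := (Nat.dvd_prime_pow Nat.prime_two).1 hrhodvd
                  have hjn : j < n := by
                    by_contra hcj; push_neg at hcj
                    have : (2:ℕ) ^ n ≤ 2 ^ j := Nat.pow_le_pow_right (by norm_num) hcj
                    omega
                  have h10 : (2:ℕ) ^ (j + 1) ≤ 2 ^ n := Nat.pow_le_pow_right (by norm_num) (by omega)
                  have h11 : (2:ℕ) ^ (j + 1) = 2 * 2 ^ j := by rw [pow_succ]; ring
                  omega
                have h11 : lvQ op n (2 ^ n - (i + 1))
                    (2 * lvP (lvQ op n) n (2 ^ n - (i + 1))) = 2 ^ n :=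
                  lv_hit h' hr1 hrlt 2 (by norm_num) hρhalf
                have hbb2 := lv_bounds h hr1 (by omega)
                  (y := 2 * lvP (lvQ op n) n (2 ^ n - (i + 1))) (by omega) (by omega)
                have h13 : lvQ op n (2 ^ n - (i + 1))
                    (2 * lvP (lvQ op n) n (2 ^ n - (i + 1))) ≡
                    op (2 ^ n - (i + 1)) (2 * lvP (lvQ op n) n (2 ^ n - (i + 1))) [MOD 2 ^ n] :=
                  bar_modeq hMpos hbb2.1
                rw [h11] at h13
                have h12 : 2 ^ n ∣ op (2 ^ n - (i + 1))
                    (2 * lvP (lvQ op n) n (2 ^ n - (i + 1))) :=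
                  (Nat.modEq_zero_iff_dvd).1 (h13.symm.trans ((Nat.modEq_zero_iff_dvd).2 dvd_rfl))
                have h14 : op (2 ^ n - (i + 1)) (2 * lvP (lvQ op n) n (2 ^ n - (i + 1))) ≠
                    2 ^ (n + 1) := lvP_min (by omega) (by omega)
                rcases dvd_two_cases hMpos h12 hbb2.1 (by omega) with h15 | h15
                · have h16 := lv_strict h hr1 (by omega)
                    (lvP (lvQ op n) n (2 ^ n - (i + 1)))
                    (2 * lvP (lvQ op n) n (2 ^ n - (i + 1))) hrhopos (by omega) (by omega)
                  omega
                · omega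
              · have h16 : lvP op (n + 1) (2 ^ n - (i + 1)) ≤
                    lvP (lvQ op n) n (2 ^ n - (i + 1)) := lvP_min' hrhopos (by omega)
                omega
            have hPr_dvd : lvP op (n + 1) (2 ^ n - (i + 1)) ∣ 2 ^ d := by
              apply pow2_dvd_of_lt (lv_P_dvd_pow h hr1 (by omega))
              have : (2:ℕ) ^ (d + 1) = 2 * 2 ^ d := by rw [pow_succ]; ring
              omega
            obtain ⟨t, ht⟩ := hPr_dvd.trans hd
            have ht1 : 1 ≤ t := by
              rcases Nat.eq_zero_or_pos t with h0 | h1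
              · exfalso; rw [h0, mul_zero] at ht; omega
              · exact h1
            have e3 : p + 1 = 1 + t * lvP op (n + 1) (2 ^ n - (i + 1)) := by
              rw [ht]; ring
            have h17 : op (2 ^ n - (i + 1)) (p + 1) = op (2 ^ n - (i + 1)) 1 := by
              rw [e3]
              exact lv_per_mul h hr1 (by omega) t 1 (le_refl 1) (by rw [← e3]; omega)
            rw [lv_succ h hr1 (by omega)] at h17
            rw [h17] at hstep
            omega
          · omega
      constructor
      · intro hfx
        by_contra hc
        push_neg at hc
        rcases le_or_gt q (2 ^ n) with hle | hlt
        · rcases lt_or_ge (2 ^ n - 2 ^ d) q with h1 | h1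
          · have h2 := CRUX (2 ^ n - q) (by omega)
            rw [show 2 ^ n - (2 ^ n - q) = q from by omega] at h2
            omega
          · have hne : lvQ op n pb q ≠ q := by
              intro hcq
              have := (IH q hq1 hle).1 hcq
              omega
            have hcc := CC q hq1 hle
            rw [hfx] at hcc
            exact hne (eq_of_modeq_range hcc.symm (bar_range hMpos).1 (bar_range hMpos).2
              hq1 hle)
        · have hr1 : 1 ≤ q - 2 ^ n := by omega
          have hrle : q - 2 ^ n ≤ 2 ^ n := by omega
          have hcol : op p q = op p (q - 2 ^ n) := by
            have e4 : q = (q - 2 ^ n) + 2 ^ n := by omega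
            conv_lhs => rw [e4]
            exact lv_col h hp1 hplt hr1 hrle
          have hne : lvQ op n pb (q - 2 ^ n) ≠ q - 2 ^ n := by
            intro hcq
            have := (IH (q - 2 ^ n) hr1 hrle).1 hcq
            omega
          have hcc := CC (q - 2 ^ n) hr1 hrle
          rw [← hcol, hfx] at hcc
          have hq' : q - 2 ^ n ≡ q [MOD 2 ^ n] :=
            (Nat.modEq_iff_dvd' (by omega)).2 ⟨1, by omega⟩
          have h18 : lvQ op n pb (q - 2 ^ n) ≡ q - 2 ^ n [MOD 2 ^ n] :=
            hcc.symm.trans hq'.symm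
          exact hne (eq_of_modeq_range h18 (bar_range hMpos).1 (bar_range hMpos).2 hr1 hrle)
      · intro hgt
        have hqgt : 2 ^ n < q := by omega
        have h2 := CRUX (2 ^ (n + 1) - q) (by omega)
        rw [show 2 ^ n - (2 ^ (n + 1) - q) = q - 2 ^ n from by omega,
          show 2 ^ (n + 1) - (2 ^ (n + 1) - q) = q from by omega] at h2
        have e4 : q = (q - 2 ^ n) + 2 ^ n := by omega
        conv_lhs => rw [e4]
        rw [lv_col h hp1 hplt (by omega) (by omega)]
        exact h2
    · -- p = 2^(n+1)
      subst hpeq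
      have hdle : d ≤ n + 1 := (Nat.pow_dvd_pow_iff_le_right (by norm_num : (1:ℕ) < 2)).1 hd
      have hdge : d = n + 1 := by
        by_contra hc
        exact hd' (pow_dvd_pow 2 (by omega))
      constructor
      · intro _
        rw [hdge]
        omega
      · intro _
        exact lv_id h q hq1 hq2

end LaverAux

/-- If `2^d` exactly divides `p`, then `p *_n q = q` holds exactly for
`2^n − 2^d < q ≤ 2^n`; in particular, for `n ≥ 1` and `q ≤ 2^(n-1)`,
`p *_n q = q` forces `p = 2^n`. -/
theorem laver_fixed_points (n : ℕ) (op : ℕ → ℕ → ℕ) (h : IsLaverOp n op)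
    (p : ℕ) (hp1 : 1 ≤ p) (hp2 : p ≤ 2 ^ n)
    (d : ℕ) (hd : 2 ^ d ∣ p) (hd' : ¬ 2 ^ (d + 1) ∣ p) :
    (∀ q, 2 ^ n - 2 ^ d < q → q ≤ 2 ^ n → op p q = q) ∧
    (∀ q, 1 ≤ q → q ≤ 2 ^ n - 2 ^ d → op p q ≠ q) ∧
    (1 ≤ n → ∀ q, 1 ≤ q → q ≤ 2 ^ (n - 1) → op p q = q → p = 2 ^ n) := by
  have key := LaverAux.laver_thm n op h p hp1 hp2 d hd hd'
  have hd1 : (1:ℕ) ≤ 2 ^ d := Nat.one_le_two_pow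
  have hn1 : (1:ℕ) ≤ 2 ^ n := Nat.one_le_two_pow
  refine ⟨?_, ?_, ?_⟩
  · intro q hq1 hq2
    exact (key q (by omega) hq2).2 hq1
  · intro q hq1 hq2 hfx
    have h2 : q ≤ 2 ^ n := by omega
    have := (key q hq1 h2).1 hfx
    omega
  · intro hn q hq1 hq2 hfx
    have e : (2:ℕ) ^ n = 2 * 2 ^ (n - 1) := by
      conv_lhs => rw [show n = (n - 1) + 1 from by omega]
      rw [pow_succ]; ring
    have h2 : q ≤ 2 ^ n := by omega
    have h3 := (key q hq1 h2).1 hfx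
    have h4 : (2:ℕ) ^ (n - 1) < 2 ^ d := by omega
    have h5 : n - 1 < d := by
      by_contra hc; push_neg at hc
      have := Nat.pow_le_pow_right (by norm_num : 1 ≤ 2) hc
      omega
    have h7 : (2:ℕ) ^ n ≤ 2 ^ d := Nat.pow_le_pow_right (by norm_num) (by omega)
    have h8 : (2:ℕ) ^ d ≤ p := Nat.le_of_dvd (by omega) hd
    omega
end
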